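/- arXiv:1805.12472 — 6 statements merged into one kernel-verified Lean document; each statement's English description precedes it below -/
import Mathlib

section
/- Let n ≥ 2 and let J be the almost-surely unique index maximizing X_i over i ∈ {1,…,n}. Then E[Y_J] = ρ · E[X_J]; consequently the max estimator ρ̂_max = Y_J / E[X_J] is an unbiased estimator of ρ. -/
set_option autoImplicit false
set_option linter.unusedSectionVars false
set_option maxHeartbeats 1000000

open MeasureTheory ProbabilityTheory Filter

/-- The standard normal density `φ(x) = e^{-x²/2} / √(2π)`. -/
noncomputable def stdGaussianPDF (x : ℝ) : ℝ := Real.exp (-x ^ 2 / 2) / Real.sqrt (2 * Real.pi)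

namespace StmtAux

open Real Set
open scoped ENNReal NNReal

noncomputable def γ : Measure ℝ := gaussianReal 0 1
instance : IsProbabilityMeasure γ := by rw [γ]; infer_instance

lemma γ_eq : γ = gaussianReal 0 1 := rfl

lemma gpdf_eq : gaussianPDFReal 0 1 = fun x => (√(2 * π))⁻¹ * rexp (-(1/2) * x ^ 2) := by
  ext x
  simp only [gaussianPDFReal, NNReal.coe_one, mul_one]
  ring_nf

lemma gpdf_smul (x : ℝ) : ((gaussianPDFReal 0 1 x).toNNReal : ℝ≥0) • x
    = gaussianPDFReal 0 1 x * x := by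
  simp [NNReal.smul_def, Real.coe_toNNReal _ (gaussianPDFReal_nonneg 0 1 x)]

lemma γ_def : γ = (volume : Measure ℝ).withDensity
    (fun x => ((gaussianPDFReal 0 1 x).toNNReal : ℝ≥0∞)) := by
  rw [γ, gaussianReal_of_var_ne_zero _ one_ne_zero]
  rfl

lemma meas_pdf : Measurable fun x => (gaussianPDFReal 0 1 x).toNNReal :=
  (measurable_gaussianPDFReal 0 1).real_toNNReal

lemma integrable_id_γ : Integrable (fun x => x) γ := by
  rw [γ_def, integrable_withDensity_iff_integrable_smul meas_pdf]
  have h : Integrable (fun x:ℝ => (√(2 * π))⁻¹ * (x * rexp (-(1/2) * x^2))) volume :=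
    (integrable_mul_exp_neg_mul_sq (b := (1/2:ℝ)) (by norm_num)).const_mul _
  refine h.congr (Filter.Eventually.of_forall fun x => ?_)
  dsimp only
  rw [gpdf_smul, gpdf_eq]
  ring

lemma integral_id_γ : ∫ x, x ∂γ = 0 := by
  rw [γ_def, integral_withDensity_eq_integral_smul meas_pdf]
  simp_rw [gpdf_smul]
  have hodd : ∀ x:ℝ, gaussianPDFReal 0 1 (-x) * (-x) = -(gaussianPDFReal 0 1 x * x) := by
    intro x; rw [gpdf_eq]; ring_nf
  have h2 := integral_neg_eq_self (fun x => gaussianPDFReal 0 1 x * x) (volume : Measure ℝ)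
  simp_rw [hodd] at h2
  rw [integral_neg] at h2
  linarith

lemma γ_singleton (x : ℝ) : γ {x} = 0 :=
  gaussianReal_absolutelyContinuous 0 one_ne_zero (measure_singleton x)

lemma γ_diag : (γ.prod γ) {p : ℝ × ℝ | p.1 = p.2} = 0 := by
  have hm : MeasurableSet {p : ℝ × ℝ | p.1 = p.2} :=
    measurableSet_eq_fun measurable_fst measurable_snd
  rw [Measure.prod_apply hm]
  have h : ∀ x : ℝ, γ (Prod.mk x ⁻¹' {p : ℝ × ℝ | p.1 = p.2}) = 0 := by
    intro x
    have : (Prod.mk x ⁻¹' {p : ℝ × ℝ | p.1 = p.2}) = {x} := by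
      ext y; simp [eq_comm]
    rw [this]; exact γ_singleton x
  simp [h, γ_singleton]

variable {Ω : Type*} [MeasureSpace Ω] [IsProbabilityMeasure (ℙ : Measure Ω)]

lemma iIndepFun_congr {ι : Type*} {β : ι → Type*} {m : ∀ i, MeasurableSpace (β i)}
    {f g : ∀ i, Ω → β i} (hf : iIndepFun f ℙ) (h : ∀ i, f i =ᵐ[ℙ] g i) :
    iIndepFun g ℙ := by
  rw [iIndepFun_iff_measure_inter_preimage_eq_mul] at hf ⊢
  intro S sets hsets
  have hae : ∀ᵐ ω ∂ℙ, ∀ i ∈ S, f i ω = g i ω :=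
    (ae_ball_iff S.countable_toSet).2 fun i _ => h i
  have h1 : (⋂ i ∈ S, g i ⁻¹' sets i) =ᵐ[ℙ] (⋂ i ∈ S, f i ⁻¹' sets i) := by
    rw [Filter.eventuallyEq_set]
    filter_upwards [hae] with ω hω
    simp only [Set.mem_iInter, Set.mem_preimage]
    exact ⟨fun H i hi => (hω i hi) ▸ H i hi, fun H i hi => (hω i hi) ▸ H i hi⟩
  rw [measure_congr h1, hf S hsets]
  refine Finset.prod_congr rfl fun i hi => ?_
  refine measure_congr ?_
  rw [Filter.eventuallyEq_set]
  filter_upwards [h i] with ω hω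
  simp [Set.mem_preimage, hω]

lemma key_indep (P : ℕ → Ω → ℝ × ℝ) (hmeas : ∀ i, Measurable (P i))
    (hind : iIndepFun P ℙ)
    (hlaw : ∀ i, Measure.map (P i) ℙ = γ.prod γ)
    (i : ℕ) (T : Finset ℕ) (hiT : i ∉ T) :
    IndepFun (fun ω => (P i ω).2) (fun ω => ((P i ω).1, fun j : T => P j ω)) ℙ := by
  set R : Ω → (T → ℝ × ℝ) := fun ω j => P j ω with hR
  have hRmeas : Measurable R := measurable_pi_lambda _ fun j => hmeas j
  have h1 : IndepFun (fun ω (k : ({i} : Finset ℕ)) => P k ω) R ℙ :=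
    hind.indepFun_finset {i} T (Finset.disjoint_singleton_left.2 hiT) hmeas
  have hPR : IndepFun (P i) R ℙ := by
    have := h1.comp (measurable_pi_apply (⟨i, Finset.mem_singleton_self i⟩ : ({i} : Finset ℕ)))
      measurable_id
    exact this
  set νR : Measure (T → ℝ × ℝ) := Measure.map R ℙ with hνR
  have : IsProbabilityMeasure νR := Measure.isProbabilityMeasure_map hRmeas.aemeasurable
  have h2 : Measure.map (fun ω => (P i ω, R ω)) ℙ = (γ.prod γ).prod νR := by
    rw [← hlaw i, hνR]
    exact (indepFun_iff_map_prod_eq_prod_map_map (hmeas i).aemeasurable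
      hRmeas.aemeasurable).1 hPR
  have hmapZ : Measure.map (fun ω => (P i ω).2) ℙ = γ := by
    have : (fun ω => (P i ω).2) = Prod.snd ∘ (P i) := rfl
    rw [this, ← Measure.map_map measurable_snd (hmeas i), hlaw i, Measure.map_snd_prod]
    simp
  have hmapW : Measure.map (fun ω => ((P i ω).1, R ω)) ℙ = γ.prod νR := by
    have hc : (fun ω => ((P i ω).1, R ω)) = (Prod.map Prod.fst id) ∘ (fun ω => (P i ω, R ω)) := rfl
    rw [hc, ← Measure.map_map (measurable_fst.prodMap measurable_id)
      ((hmeas i).prodMk hRmeas), h2, ← Measure.map_prod_map _ _ measurable_fst measurable_id,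
      Measure.map_fst_prod, Measure.map_id]
    simp
  have hmapZW : Measure.map (fun ω => ((P i ω).2, ((P i ω).1, R ω))) ℙ = γ.prod (γ.prod νR) := by
    have hΦ : (fun ω => ((P i ω).2, ((P i ω).1, R ω)))
        = (MeasurableEquiv.prodAssoc ∘ (Prod.map Prod.swap id)) ∘ (fun ω => (P i ω, R ω)) := rfl
    rw [hΦ, ← Measure.map_map (MeasurableEquiv.prodAssoc.measurable.comp
      (measurable_swap.prodMap measurable_id)) ((hmeas i).prodMk hRmeas), h2,
      ← Measure.map_map MeasurableEquiv.prodAssoc.measurable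
        (measurable_swap.prodMap measurable_id),
      ← Measure.map_prod_map _ _ measurable_swap measurable_id,
      Measure.prod_swap, Measure.map_id, Measure.prodAssoc_prod]
  refine (indepFun_iff_map_prod_eq_prod_map_map ((hmeas i).snd).aemeasurable
    ((((hmeas i).fst).prodMk hRmeas)).aemeasurable).2 ?_
  rw [hmapZ, hmapW, hmapZW]

section laws
variable {P : Ω → ℝ × ℝ} (hmeas : Measurable P) (hlaw : Measure.map P ℙ = γ.prod γ)
include hmeas hlaw

lemma map_fst_γ : Measure.map (fun ω => (P ω).1) ℙ = γ := by
  have : (fun ω => (P ω).1) = Prod.fst ∘ P := rfl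
  rw [this, ← Measure.map_map measurable_fst hmeas, hlaw, Measure.map_fst_prod]
  simp

lemma map_snd_γ : Measure.map (fun ω => (P ω).2) ℙ = γ := by
  have : (fun ω => (P ω).2) = Prod.snd ∘ P := rfl
  rw [this, ← Measure.map_map measurable_snd hmeas, hlaw, Measure.map_snd_prod]
  simp

lemma integrable_fst : Integrable (fun ω => (P ω).1) ℙ := by
  have h : Integrable (fun x : ℝ => x) (Measure.map (fun ω => (P ω).1) ℙ) := by
    rw [map_fst_γ hmeas hlaw]; exact integrable_id_γ
  exact (integrable_map_measure (g := fun x : ℝ => x)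
    h.aestronglyMeasurable hmeas.fst.aemeasurable).1 h

lemma integrable_snd : Integrable (fun ω => (P ω).2) ℙ := by
  have h : Integrable (fun x : ℝ => x) (Measure.map (fun ω => (P ω).2) ℙ) := by
    rw [map_snd_γ hmeas hlaw]; exact integrable_id_γ
  exact (integrable_map_measure (g := fun x : ℝ => x)
    h.aestronglyMeasurable hmeas.snd.aemeasurable).1 h

lemma integral_fst_zero : ∫ ω, (P ω).1 ∂ℙ = 0 := by
  have hm : AEStronglyMeasurable (fun x : ℝ => x) (Measure.map (fun ω => (P ω).1) ℙ) := by
    rw [map_fst_γ hmeas hlaw]; exact aestronglyMeasurable_id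
  have h := integral_map (f := fun x : ℝ => x) hmeas.fst.aemeasurable hm
  rw [map_fst_γ hmeas hlaw] at h
  rw [← h, integral_id_γ]

lemma integral_snd_zero : ∫ ω, (P ω).2 ∂ℙ = 0 := by
  have hm : AEStronglyMeasurable (fun x : ℝ => x) (Measure.map (fun ω => (P ω).2) ℙ) := by
    rw [map_snd_γ hmeas hlaw]; exact aestronglyMeasurable_id
  have h := integral_map (f := fun x : ℝ => x) hmeas.snd.aemeasurable hm
  rw [map_snd_γ hmeas hlaw] at h
  rw [← h, integral_id_γ]

end laws

lemma integral_indicator_snd_zero (P : ℕ → Ω → ℝ × ℝ) (hmeas : ∀ i, Measurable (P i))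
    (hind : iIndepFun P ℙ)
    (hlaw : ∀ i, Measure.map (P i) ℙ = γ.prod γ)
    (i n : ℕ) :
    ∫ ω, Set.indicator {ω' | ∀ j, j < n → j ≠ i → (P j ω').1 < (P i ω').1}
      (fun _ => (1:ℝ)) ω * (P i ω).2 ∂ℙ = 0 := by
  set T : Finset ℕ := (Finset.range n).erase i with hT
  have hiT : i ∉ T := fun h => (Finset.mem_erase.1 h).1 rfl
  set S : Set (ℝ × (T → ℝ × ℝ)) := {p | ∀ j : T, (p.2 j).1 < p.1} with hS
  have hSmeas : MeasurableSet S := by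
    have : S = ⋂ j : T, {p : ℝ × (T → ℝ × ℝ) | (p.2 j).1 < p.1} := by
      ext p; simp [hS]
    rw [this]
    exact MeasurableSet.iInter fun j =>
      measurableSet_lt (measurable_fst.comp ((measurable_pi_apply j).comp measurable_snd))
        measurable_fst
  set W : Ω → ℝ × (T → ℝ × ℝ) := fun ω => ((P i ω).1, fun j : T => P j ω) with hW
  have hWmeas : Measurable W :=
    (hmeas i).fst.prodMk (measurable_pi_lambda _ fun j => hmeas j)
  have hset : {ω' | ∀ j, j < n → j ≠ i → (P j ω').1 < (P i ω').1} = W ⁻¹' S := by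
    ext ω
    simp only [Set.mem_setOf_eq, Set.mem_preimage, hW, hS]
    constructor
    · rintro h ⟨j, hj⟩
      exact h j (Finset.mem_range.1 (Finset.mem_of_mem_erase hj)) (Finset.ne_of_mem_erase hj)
    · intro h j hj hji
      exact h ⟨j, Finset.mem_erase.2 ⟨hji, Finset.mem_range.2 hj⟩⟩
  rw [hset]
  have hg : Measurable (S.indicator (fun _ => (1:ℝ))) := measurable_const.indicator hSmeas
  have hI : IndepFun (fun ω => S.indicator (fun _ => (1:ℝ)) (W ω)) (fun ω => (P i ω).2) ℙ :=
    ((key_indep P hmeas hind hlaw i T hiT).comp measurable_id hg).symm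
  have hmul := hI.integral_mul_eq_mul_integral ((hg.comp hWmeas).aestronglyMeasurable)
    ((hmeas i).snd.aestronglyMeasurable)
  have hmm : (fun ω => Set.indicator S (fun _ => (1:ℝ)) (W ω)) * (fun ω => (P i ω).2)
      = fun ω => Set.indicator S (fun _ => (1:ℝ)) (W ω) * (P i ω).2 := rfl
  rw [hmm] at hmul
  have hind_eq : ∀ ω, (W ⁻¹' S).indicator (fun _ => (1:ℝ)) ω
      = S.indicator (fun _ => (1:ℝ)) (W ω) := by
    intro ω
    by_cases hω : W ω ∈ S <;> simp [Set.indicator_apply, Set.mem_preimage, hω]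
  calc ∫ ω, (W ⁻¹' S).indicator (fun _ => (1:ℝ)) ω * (P i ω).2 ∂ℙ
      = ∫ ω, S.indicator (fun _ => (1:ℝ)) (W ω) * (P i ω).2 ∂ℙ := by simp_rw [hind_eq]
    _ = (∫ ω, S.indicator (fun _ => (1:ℝ)) (W ω) ∂ℙ) * ∫ ω, (P i ω).2 ∂ℙ := hmul
    _ = 0 := by rw [integral_snd_zero (hmeas i) (hlaw i), mul_zero]

end StmtAux

open StmtAux

/-- with `J` the (a.s. unique) argmax of `X₁,…,Xₙ`, we have
`E[Y_J] = ρ ⬝ E[X_J]`, hence the max estimator `Y_J / E[X_J]` is unbiased. -/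
theorem stmt0
    {Ω : Type*} [MeasureSpace Ω] [IsProbabilityMeasure (ℙ : Measure Ω)]
    (ρ : ℝ) (hρ : ρ ∈ Set.Icc (-1 : ℝ) 1)
    (X Z : ℕ → Ω → ℝ)
    (hindep : iIndepFun (fun i ω => (X i ω, Z i ω)) ℙ)
    (hlaw : ∀ i, Measure.map (fun ω => (X i ω, Z i ω)) ℙ
      = (gaussianReal 0 1).prod (gaussianReal 0 1))
    (Y : ℕ → Ω → ℝ)
    (hY : ∀ i ω, Y i ω = ρ * X i ω + Real.sqrt (1 - ρ ^ 2) * Z i ω)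
    (n : ℕ) (hn : 2 ≤ n)
    (J : Ω → ℕ) (hJmeas : Measurable J)
    (hJ : ∀ᵐ ω ∂ℙ, J ω < n ∧ ∀ i < n, X i ω ≤ X (J ω) ω) :
    (∫ ω, Y (J ω) ω) = ρ * ∫ ω, X (J ω) ω ∧
    (∫ ω, Y (J ω) ω / (∫ ω', X (J ω') ω')) = ρ := by
  classical
  -- basic measurability of the pairs
  have hae : ∀ i, AEMeasurable (fun ω => (X i ω, Z i ω)) ℙ := by
    intro i
    by_contra h
    have h0 := Measure.map_of_not_aemeasurable h
    rw [hlaw i] at h0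
    have : ((gaussianReal 0 1).prod (gaussianReal 0 1)) Set.univ = 1 := measure_univ
    rw [h0] at this
    simp at this
  set P : ℕ → Ω → ℝ × ℝ := fun i => (hae i).mk _ with hP
  have hPmeas : ∀ i, Measurable (P i) := fun i => (hae i).measurable_mk
  have hPae : ∀ i, (fun ω => (X i ω, Z i ω)) =ᵐ[ℙ] P i := fun i => (hae i).ae_eq_mk
  have hPlaw : ∀ i, Measure.map (P i) ℙ = γ.prod γ := by
    intro i
    rw [← Measure.map_congr (hPae i), hlaw i, γ_eq]
  have hPind : iIndepFun P ℙ := iIndepFun_congr hindep hPae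
  have hXae : ∀ i, ∀ᵐ ω ∂ℙ, X i ω = (P i ω).1 := by
    intro i; filter_upwards [hPae i] with ω hω; rw [← hω]
  have hZae : ∀ i, ∀ᵐ ω ∂ℙ, Z i ω = (P i ω).2 := by
    intro i; filter_upwards [hPae i] with ω hω; rw [← hω]
  -- no ties, a.e.
  have hties : ∀ᵐ ω ∂ℙ, ∀ i, ∀ j, i ≠ j → (P i ω).1 ≠ (P j ω).1 := by
    rw [ae_all_iff]
    intro i
    rw [ae_all_iff]
    intro j
    by_cases hij : i = j
    · exact Filter.Eventually.of_forall fun ω h => absurd hij h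
    · have hIF : IndepFun (fun ω => (P i ω).1) (fun ω => (P j ω).1) ℙ :=
        (hPind.indepFun hij).comp measurable_fst measurable_fst
      have hmap : Measure.map (fun ω => ((P i ω).1, (P j ω).1)) ℙ = γ.prod γ := by
        rw [(indepFun_iff_map_prod_eq_prod_map_map (hPmeas i).fst.aemeasurable
          (hPmeas j).fst.aemeasurable).1 hIF,
          map_fst_γ (hPmeas i) (hPlaw i), map_fst_γ (hPmeas j) (hPlaw j)]
      have hnull : ℙ {ω | (P i ω).1 = (P j ω).1} = 0 := by
        have hmeasset : MeasurableSet {p : ℝ × ℝ | p.1 = p.2} :=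
          measurableSet_eq_fun measurable_fst measurable_snd
        have := Measure.map_apply_of_aemeasurable
          (((hPmeas i).fst.prodMk (hPmeas j).fst)).aemeasurable (μ := ℙ) hmeasset
        rw [hmap, γ_diag] at this
        exact this.symm ▸ rfl
      rw [ae_iff]
      refine measure_mono_null (fun ω hω => ?_) hnull
      simp only [Set.mem_setOf_eq, Classical.not_imp, not_not] at hω ⊢
      exact hω.2
  -- the argmax events
  set A : ℕ → Set Ω := fun i => {ω | ∀ j, j < n → j ≠ i → (P j ω).1 < (P i ω).1} with hA
  -- key pointwise identity, a.e.
  have hkey : ∀ i, i < n → ∀ᵐ ω ∂ℙ,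
      Set.indicator {ω' | J ω' = i} (Z i) ω
        = Set.indicator (A i) (fun _ => (1:ℝ)) ω * (P i ω).2 := by
    intro i hi
    have hXall : ∀ᵐ ω ∂ℙ, ∀ j, X j ω = (P j ω).1 := ae_all_iff.2 hXae
    filter_upwards [hJ, hties, hXall, hZae i] with ω hJω htω hXω hZω
    by_cases hJi : J ω = i
    · have hmem : ω ∈ A i := by
        intro j hj hji
        have h1 : X j ω ≤ X (J ω) ω := hJω.2 j hj
        rw [hJi] at h1
        have h2 : (P j ω).1 ≠ (P i ω).1 := htω j i hji
        rw [hXω j, hXω i] at h1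
        exact lt_of_le_of_ne h1 h2
      rw [Set.indicator_of_mem (show ω ∈ {ω' | J ω' = i} from hJi),
        Set.indicator_of_mem hmem, one_mul, hZω]
    · have hnmem : ω ∉ A i := by
        intro hmem
        have h1 := hmem (J ω) hJω.1 hJi
        have h2 : X i ω ≤ X (J ω) ω := hJω.2 i hi
        rw [hXω i, hXω (J ω)] at h2
        exact absurd h2 (not_le.2 h1)
      rw [Set.indicator_of_notMem (show ω ∉ {ω' | J ω' = i} from hJi),
        Set.indicator_of_notMem hnmem, zero_mul]
  -- the indicator integrals of Z vanish
  have hizero : ∀ i, i < n → ∫ ω, Set.indicator {ω' | J ω' = i} (Z i) ω ∂ℙ = 0 := by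
    intro i hi
    rw [integral_congr_ae (hkey i hi)]
    exact integral_indicator_snd_zero P hPmeas hPind hPlaw i n
  -- integrability of the X i, Z i
  have hXint : ∀ i, Integrable (X i) ℙ := by
    intro i
    have hXeq : X i =ᵐ[ℙ] fun ω => (P i ω).1 := hXae i
    exact (integrable_fst (hPmeas i) (hPlaw i)).congr hXeq.symm
  have hZint : ∀ i, Integrable (Z i) ℙ := by
    intro i
    have hZeq : Z i =ᵐ[ℙ] fun ω => (P i ω).2 := hZae i
    exact (integrable_snd (hPmeas i) (hPlaw i)).congr hZeq.symm
  have hXzero : ∀ i, ∫ ω, X i ω ∂ℙ = 0 := by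
    intro i
    rw [integral_congr_ae (show X i =ᵐ[ℙ] fun ω => (P i ω).1 from hXae i)]
    exact integral_fst_zero (hPmeas i) (hPlaw i)
  -- decomposition over the value of J
  have hdec : ∀ (f : ℕ → Ω → ℝ), (fun ω => f (J ω) ω)
      =ᵐ[ℙ] fun ω => ∑ i ∈ Finset.range n, Set.indicator {ω' | J ω' = i} (f i) ω := by
    intro f
    filter_upwards [hJ] with ω hω
    rw [Finset.sum_eq_single (J ω)]
    · rw [Set.indicator_of_mem (show ω ∈ {ω' | J ω' = J ω} from rfl)]
    · intro j _ hne
      exact Set.indicator_of_notMem (show ω ∉ {ω' | J ω' = j} from fun h => hne h.symm) _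
    · intro h; exact absurd (Finset.mem_range.2 hω.1) h
  have hindint : ∀ (f : ℕ → Ω → ℝ), (∀ i, Integrable (f i) ℙ) → ∀ i,
      Integrable (fun ω => Set.indicator {ω' | J ω' = i} (f i) ω) ℙ := by
    intro f hf i
    exact (hf i).indicator (hJmeas (measurableSet_singleton i))
  have hSint : ∀ (f : ℕ → Ω → ℝ), (∀ i, Integrable (f i) ℙ) →
      Integrable (fun ω => ∑ i ∈ Finset.range n,
        Set.indicator {ω' | J ω' = i} (f i) ω) ℙ := by
    intro f hf
    exact integrable_finset_sum _ fun i _ => hindint f hf i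
  have hXJint : Integrable (fun ω => X (J ω) ω) ℙ := (hSint X hXint).congr (hdec X).symm
  have hZJint : Integrable (fun ω => Z (J ω) ω) ℙ := (hSint Z hZint).congr (hdec Z).symm
  have hZJ_eq : ∫ ω, Z (J ω) ω ∂ℙ = 0 := by
    rw [integral_congr_ae (hdec Z), integral_finset_sum _ fun i _ => hindint Z hZint i]
    exact Finset.sum_eq_zero fun i hi => hizero i (Finset.mem_range.1 hi)
  -- first statement
  have hfirst : (∫ ω, Y (J ω) ω) = ρ * ∫ ω, X (J ω) ω := by
    have hYeq : (fun ω => Y (J ω) ω)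
        = fun ω => ρ * X (J ω) ω + Real.sqrt (1 - ρ ^ 2) * Z (J ω) ω := by
      funext ω; exact hY _ ω
    rw [hYeq, integral_add (hXJint.const_mul ρ) (hZJint.const_mul _),
      integral_const_mul, integral_const_mul, hZJ_eq, mul_zero, add_zero]
  -- positivity of ∫ X (J ω) ω
  have habs_pos : 0 < ∫ ω, |X 0 ω - X 1 ω| ∂ℙ := by
    have hfint : Integrable (fun ω => |X 0 ω - X 1 ω|) ℙ := ((hXint 0).sub (hXint 1)).abs
    have hne : ∀ᵐ ω ∂ℙ, |X 0 ω - X 1 ω| ≠ 0 := by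
      filter_upwards [hXae 0, hXae 1, hties] with ω h0 h1 ht
      intro hf
      have h2 : X 0 ω = X 1 ω := sub_eq_zero.1 (abs_eq_zero.1 hf)
      exact ht 0 1 (by norm_num) (by rw [← h0, ← h1, h2])
    rw [integral_pos_iff_support_of_nonneg_ae
      (Filter.Eventually.of_forall fun ω => abs_nonneg _) hfint]
    have h0 : ℙ (Function.support fun ω => |X 0 ω - X 1 ω|)ᶜ = 0 := by
      rw [ae_iff] at hne
      rw [Function.support, Set.compl_setOf]
      exact hne
    have h1 : ℙ (Function.support fun ω => |X 0 ω - X 1 ω|) = 1 := by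
      rw [measure_congr (MeasureTheory.ae_eq_univ.2 h0)]
      exact measure_univ
    rw [h1]
    norm_num
  have hlow : ∀ᵐ ω ∂ℙ, (X 0 ω + X 1 ω)/2 + |X 0 ω - X 1 ω|/2 ≤ X (J ω) ω := by
    filter_upwards [hJ] with ω hω
    have h0 := hω.2 0 (by omega)
    have h1 := hω.2 1 (by omega)
    rcases abs_cases (X 0 ω - X 1 ω) with ⟨he, _⟩ | ⟨he, _⟩ <;> rw [he] <;> linarith
  have hint1 : Integrable (fun ω => (X 0 ω + X 1 ω)/2) ℙ := by
    exact ((hXint 0).add (hXint 1)).div_const 2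
  have hint2 : Integrable (fun ω => |X 0 ω - X 1 ω|/2) ℙ := by
    exact (((hXint 0).sub (hXint 1)).abs).div_const 2
  have hlowint : Integrable (fun ω => (X 0 ω + X 1 ω)/2 + |X 0 ω - X 1 ω|/2) ℙ := by
    exact hint1.add hint2
  have hXJpos : 0 < ∫ ω, X (J ω) ω ∂ℙ := by
    have hmono := integral_mono_ae hlowint hXJint hlow
    have hval : ∫ ω, ((X 0 ω + X 1 ω)/2 + |X 0 ω - X 1 ω|/2) ∂ℙ
        = (∫ ω, |X 0 ω - X 1 ω| ∂ℙ)/2 := by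
      have hadd : Integrable (fun ω => X 0 ω + X 1 ω) ℙ := by
        exact (hXint 0).add (hXint 1)
      rw [integral_add hint1 hint2, integral_div, integral_div,
        integral_add (hXint 0) (hXint 1), hXzero 0, hXzero 1]
      ring
    rw [hval] at hmono
    linarith
  refine ⟨hfirst, ?_⟩
  rw [integral_div, hfirst]
  field_simp
end

section
/- Let n ≥ 2 and let J be the almost-surely unique index maximizing X_i over i ∈ {1,…,n}. Then the variance of the max estimator ρ̂_max = Y_J / E[X_J] satisfies Var(ρ̂_max) = (ρ² · Var(X_J) + (1 − ρ²)) / (E[X_J])². -/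
set_option autoImplicit false

open MeasureTheory ProbabilityTheory Filter

section Stmt1AuxSection
open Real
open scoped NNReal ENNReal

noncomputable section

lemma sq_half_tendsto_bot : Tendsto (fun x : ℝ => -x^2/2) atTop atBot := by
  apply Tendsto.atBot_div_const (by norm_num : (0:ℝ) < 2)
  apply tendsto_neg_atBot_iff.mpr
  exact tendsto_pow_atTop (by norm_num)

lemma sq_half_tendsto_bot' : Tendsto (fun x : ℝ => -x^2/2) atBot atBot := by
  have : (fun x : ℝ => -x^2/2) = (fun x : ℝ => -x^2/2) ∘ (fun x : ℝ => -x) := by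
    funext x; simp only [Function.comp]; ring_nf
  rw [this]
  exact sq_half_tendsto_bot.comp tendsto_neg_atBot_atTop

lemma negexp_tendsto_top : Tendsto (fun x : ℝ => -Real.exp (-x^2/2)) atTop (nhds 0) := by
  rw [← neg_zero]
  exact (Real.tendsto_exp_atBot.comp sq_half_tendsto_bot).neg

lemma negexp_tendsto_bot : Tendsto (fun x : ℝ => -Real.exp (-x^2/2)) atBot (nhds 0) := by
  rw [← neg_zero]
  exact (Real.tendsto_exp_atBot.comp sq_half_tendsto_bot').neg

lemma hasDeriv_negexp (x : ℝ) :
    HasDerivAt (fun x : ℝ => -Real.exp (-x^2/2)) (x * Real.exp (-x^2/2)) x := by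
  have h1 : HasDerivAt (fun x : ℝ => -x^2/2) (-x) x := by
    have := ((hasDerivAt_pow 2 x).neg).div_const 2
    refine this.congr_deriv ?_
    norm_num
    ring
  have := (Real.hasDerivAt_exp _).comp x h1
  refine this.neg.congr_deriv ?_
  ring

lemma integrable_exp_gauss : Integrable (fun x : ℝ => Real.exp (-x^2/2)) := by
  have := integrable_exp_neg_mul_sq (b := (1:ℝ)/2) (by norm_num)
  convert this using 2 with x
  ring_nf

lemma integrable_mul_exp_gauss : Integrable (fun x : ℝ => x * Real.exp (-x^2/2)) := by
  have := integrable_mul_exp_neg_mul_sq (b := (1:ℝ)/2) (by norm_num)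
  convert this using 2 with x
  ring_nf

lemma integrable_sq_exp_gauss : Integrable (fun x : ℝ => x^2 * Real.exp (-x^2/2)) := by
  have := integrable_rpow_mul_exp_neg_mul_sq (b := (1:ℝ)/2) (s := 2) (by norm_num) (by norm_num)
  convert this using 2 with x
  rw [show ((2:ℝ) = ((2:ℕ):ℝ)) by norm_num, Real.rpow_natCast]
  ring_nf

lemma tendsto_mul_exp_gauss_top : Tendsto (fun x : ℝ => x * Real.exp (-x^2/2)) atTop (nhds 0) := by
  have h := rpow_mul_exp_neg_mul_sq_isLittleO_exp_neg (b := (1:ℝ)/2) (by norm_num) 1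
  have hlin : Tendsto (fun x : ℝ => -(1/2) * x) atTop atBot := by
    have h2 : Tendsto (fun x : ℝ => (1/2 : ℝ) * x) atTop atTop := by
      exact (tendsto_id (α := ℝ)).const_mul_atTop (by norm_num)
    have := tendsto_neg_atTop_atBot.comp h2
    refine this.congr (fun x => ?_)
    simp only [Function.comp]; ring
  have h0 : Tendsto (fun x : ℝ => Real.exp (-(1/2) * x)) atTop (nhds 0) :=
    Real.tendsto_exp_atBot.comp hlin
  have h1 := h.trans_tendsto h0
  refine h1.congr (fun x => ?_)
  rw [Real.rpow_one]
  ring_nf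

lemma tendsto_mul_exp_gauss_bot : Tendsto (fun x : ℝ => x * Real.exp (-x^2/2)) atBot (nhds 0) := by
  have : (fun x : ℝ => x * Real.exp (-x^2/2))
      = (fun x : ℝ => -(x * Real.exp (-x^2/2))) ∘ (fun x : ℝ => -x) := by
    funext x; simp only [Function.comp]; ring_nf
  rw [this, ← neg_zero]
  exact (tendsto_mul_exp_gauss_top.neg).comp tendsto_neg_atBot_atTop

lemma integral_exp_gauss : ∫ x : ℝ, Real.exp (-x^2/2) = Real.sqrt (2 * π) := by
  have := integral_gaussian ((1:ℝ)/2)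
  rw [show π / ((1:ℝ)/2) = 2 * π by ring] at this
  rw [← this]
  congr 1 with x
  ring_nf

lemma integral_mul_exp_gauss : ∫ x : ℝ, x * Real.exp (-x^2/2) = 0 := by
  have := integral_of_hasDerivAt_of_tendsto (m := (0:ℝ)) (n := (0:ℝ))
    hasDeriv_negexp integrable_mul_exp_gauss negexp_tendsto_bot negexp_tendsto_top
  simpa using this

lemma integral_sq_exp_gauss : ∫ x : ℝ, x^2 * Real.exp (-x^2/2) = Real.sqrt (2 * π) := by
  have h := integral_mul_deriv_eq_deriv_mul (u := fun x : ℝ => x) (u' := fun _ => (1:ℝ))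
    (v := fun x : ℝ => -Real.exp (-x^2/2)) (v' := fun x : ℝ => x * Real.exp (-x^2/2))
    (a' := 0) (b' := 0)
    (fun x _ => hasDerivAt_id x) (fun x _ => hasDeriv_negexp x)
    ?_ ?_ ?_ ?_
  · have h2 : ∫ x : ℝ, x * (x * Real.exp (-x^2/2)) = - ∫ x : ℝ, 1 * (-Real.exp (-x^2/2)) := by
      rw [h]; simp
    simp only [one_mul, integral_neg, neg_neg] at h2
    rw [integral_exp_gauss] at h2
    rw [← h2]
    congr 1 with x
    ring
  · apply integrable_sq_exp_gauss.congr
    filter_upwards with x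
    simp only [Pi.mul_apply]; ring
  · apply (integrable_exp_gauss.neg).congr
    filter_upwards with x
    simp only [Pi.mul_apply, Pi.one_apply, Pi.neg_apply]; ring
  · have : (fun x : ℝ => x) * (fun x : ℝ => -Real.exp (-x^2/2))
        = fun x : ℝ => -(x * Real.exp (-x^2/2)) := by
      funext x; simp only [Pi.mul_apply]; ring
    rw [this, ← neg_zero]
    exact (tendsto_mul_exp_gauss_bot).neg
  · have : (fun x : ℝ => x) * (fun x : ℝ => -Real.exp (-x^2/2))
        = fun x : ℝ => -(x * Real.exp (-x^2/2)) := by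
      funext x; simp only [Pi.mul_apply]; ring
    rw [this, ← neg_zero]
    exact (tendsto_mul_exp_gauss_top).neg

namespace Stmt1Aux

/-- abbreviation for the standard gaussian measure -/
def gmeas : Measure ℝ := gaussianReal 0 1

instance : IsProbabilityMeasure gmeas := by
  unfold gmeas; infer_instance

def gpdf (x : ℝ) : ℝ := (Real.sqrt (2*π))⁻¹ * Real.exp (-x^2/2)

lemma gpdf_nonneg (x : ℝ) : 0 ≤ gpdf x := by
  unfold gpdf; positivity

lemma gpdf_meas : Measurable gpdf := by
  unfold gpdf
  exact (((measurable_id.pow_const 2).neg.div_const 2).exp).const_mul _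

lemma gaussianPDFReal_zero_one (x : ℝ) : gaussianPDFReal 0 1 x = gpdf x := by
  unfold gaussianPDFReal gpdf
  norm_num

lemma integral_gmeas (f : ℝ → ℝ) :
    ∫ x, f x ∂gmeas = ∫ x, gpdf x * f x := by
  unfold gmeas
  rw [gaussianReal_of_var_ne_zero _ one_ne_zero]
  have hd : gaussianPDF 0 1 = fun x => ((Real.toNNReal (gpdf x) : ℝ≥0) : ℝ≥0∞) := by
    funext x
    rw [gaussianPDF, gaussianPDFReal_zero_one, ENNReal.ofReal]
  rw [hd]
  rw [integral_withDensity_eq_integral_smul (gpdf_meas.real_toNNReal) f]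
  congr 1 with x
  rw [NNReal.smul_def, smul_eq_mul, Real.coe_toNNReal _ (gpdf_nonneg x)]

lemma integrable_gmeas_iff (f : ℝ → ℝ) :
    Integrable f gmeas ↔ Integrable (fun x => gpdf x * f x) volume := by
  unfold gmeas
  rw [gaussianReal_of_var_ne_zero _ one_ne_zero]
  have hd : gaussianPDF 0 1 = fun x => ((Real.toNNReal (gpdf x) : ℝ≥0) : ℝ≥0∞) := by
    funext x
    rw [gaussianPDF, gaussianPDFReal_zero_one, ENNReal.ofReal]
  rw [hd, integrable_withDensity_iff_integrable_smul (gpdf_meas.real_toNNReal)]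
  constructor <;> intro h <;> apply h.congr <;> filter_upwards with x <;>
    rw [NNReal.smul_def, smul_eq_mul, Real.coe_toNNReal _ (gpdf_nonneg x)]

lemma sqrt_two_pi_pos : 0 < Real.sqrt (2*π) := Real.sqrt_pos.mpr (by positivity)

lemma gmeas_mean : ∫ x, x ∂gmeas = 0 := by
  rw [integral_gmeas]
  have : (fun x => gpdf x * x) = fun x => (Real.sqrt (2*π))⁻¹ * (x * Real.exp (-x^2/2)) := by
    funext x; unfold gpdf; ring
  rw [this, integral_const_mul, integral_mul_exp_gauss, mul_zero]

lemma gmeas_sq : ∫ x, x^2 ∂gmeas = 1 := by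
  rw [integral_gmeas]
  have : (fun x => gpdf x * x^2) = fun x => (Real.sqrt (2*π))⁻¹ * (x^2 * Real.exp (-x^2/2)) := by
    funext x; unfold gpdf; ring
  rw [this, integral_const_mul, integral_sq_exp_gauss, inv_mul_cancel₀ sqrt_two_pi_pos.ne']

lemma gmeas_memℒp : MemLp (id : ℝ → ℝ) 2 gmeas := by
  rw [memLp_two_iff_integrable_sq aestronglyMeasurable_id]
  rw [show (fun x : ℝ => id x ^ 2) = fun x : ℝ => x^2 by rfl]
  rw [integrable_gmeas_iff]
  have : (fun x => gpdf x * x^2) = fun x => (Real.sqrt (2*π))⁻¹ * (x^2 * Real.exp (-x^2/2)) := by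
    funext x; unfold gpdf; ring
  rw [this]
  exact integrable_sq_exp_gauss.const_mul _

end Stmt1Aux

namespace Stmt1Aux

variable {Ω : Type*} [MeasureSpace Ω] [IsProbabilityMeasure (ℙ : Measure Ω)]

lemma indep_vec_Z (X Z : ℕ → Ω → ℝ) (hXm : ∀ i, Measurable (X i)) (hZm : ∀ i, Measurable (Z i))
    (hindep : iIndepFun (fun i ω => (X i ω, Z i ω)) ℙ)
    (hlaw : ∀ i, Measure.map (fun ω => (X i ω, Z i ω)) ℙ = gmeas.prod gmeas)
    (n i : ℕ) (hi : i < n) :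
    IndepFun (fun ω (j : Fin n) => X (j : ℕ) ω) (Z i) ℙ := by
  classical
  set W : ℕ → Ω → ℝ × ℝ := fun k ω => (X k ω, Z k ω) with hW
  have hWm : ∀ k, Measurable (W k) := fun k => (hXm k).prodMk (hZm k)
  set S : Finset ℕ := (Finset.range n).erase i with hS
  set T : Finset ℕ := {i} with hT
  have hST : Disjoint S T := Finset.disjoint_singleton_right.mpr (Finset.notMem_erase i _)
  have hBC := hindep.indepFun_finset S T hST hWm
  set B : Ω → (↥S → ℝ × ℝ) := fun a (j : ↥S) => W (j : ℕ) a with hB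
  have hBmeas : Measurable B := measurable_pi_lambda _ fun j => hWm _
  have hBW : IndepFun B (W i) ℙ := by
    have h0 := hBC.comp measurable_id
      (measurable_pi_apply (⟨i, Finset.mem_singleton_self i⟩ : ↥T))
    exact h0
  have hBX : IndepFun B (X i) ℙ := hBW.comp measurable_id measurable_fst
  have hmapW : Measure.map (W i) ℙ = gmeas.prod gmeas := hlaw i
  have hmapX : Measure.map (X i) ℙ = gmeas := by
    have h0 : X i = Prod.fst ∘ W i := rfl
    rw [h0, ← Measure.map_map measurable_fst (hWm i), hmapW, Measure.map_fst_prod]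
    simp
  have hmapZ : Measure.map (Z i) ℙ = gmeas := by
    have h0 : Z i = Prod.snd ∘ W i := rfl
    rw [h0, ← Measure.map_map measurable_snd (hWm i), hmapW, Measure.map_snd_prod]
    simp
  haveI : IsProbabilityMeasure (Measure.map B ℙ) :=
    Measure.isProbabilityMeasure_map hBmeas.aemeasurable
  have h1 : Measure.map (fun ω => (B ω, W i ω)) ℙ
      = (Measure.map B ℙ).prod (gmeas.prod gmeas) := by
    rw [← hmapW]
    exact (indepFun_iff_map_prod_eq_prod_map_map hBmeas.aemeasurable
      (hWm i).aemeasurable).mp hBW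
  have h2 : Measure.map (fun ω => (B ω, X i ω)) ℙ = (Measure.map B ℙ).prod gmeas := by
    rw [← hmapX]
    exact (indepFun_iff_map_prod_eq_prod_map_map hBmeas.aemeasurable
      (hXm i).aemeasurable).mp hBX
  have h3 : Measure.map (fun ω => ((B ω, X i ω), Z i ω)) ℙ
      = ((Measure.map B ℙ).prod gmeas).prod gmeas := by
    have hcomp : (fun ω => ((B ω, X i ω), Z i ω))
        = (MeasurableEquiv.prodAssoc.symm : (↥S → ℝ × ℝ) × ℝ × ℝ ≃ᵐ _)
          ∘ (fun ω => (B ω, W i ω)) := rfl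
    rw [hcomp, ← Measure.map_map MeasurableEquiv.prodAssoc.symm.measurable
      (hBmeas.prodMk (hWm i)), h1]
    rw [← Measure.prodAssoc_prod (μ := Measure.map B ℙ) (ν := gmeas) (τ := gmeas)]
    rw [Measure.map_map MeasurableEquiv.prodAssoc.symm.measurable
      MeasurableEquiv.prodAssoc.measurable]
    simp
  have h4 : IndepFun (fun ω => (B ω, X i ω)) (Z i) ℙ := by
    rw [indepFun_iff_map_prod_eq_prod_map_map (hBmeas.prodMk (hXm i)).aemeasurable
      (hZm i).aemeasurable, h3, h2, hmapZ]
  set α : (↥S → ℝ × ℝ) × ℝ → (Fin n → ℝ) := fun p (j : Fin n) =>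
    if h : (j : ℕ) = i then p.2
    else (p.1 ⟨(j : ℕ), Finset.mem_erase.mpr ⟨h, Finset.mem_range.mpr j.isLt⟩⟩).1 with hα
  have hαm : Measurable α := by
    apply measurable_pi_lambda
    intro j
    simp only [hα]
    split_ifs with h
    · exact measurable_snd
    · exact (((measurable_pi_apply _).comp measurable_fst)).fst
  have h5 := h4.comp hαm measurable_id
  have h6 : (α ∘ fun ω => (B ω, X i ω)) = fun ω (j : Fin n) => X (j : ℕ) ω := by
    funext ω j
    simp only [Function.comp, hα, hB]
    split_ifs with h
    · rw [h]
    · rfl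
  rw [h6] at h5
  exact h5

end Stmt1Aux

namespace Stmt1Aux

variable {Ω : Type*} [MeasureSpace Ω] [IsProbabilityMeasure (ℙ : Measure Ω)]

lemma map_comp_fst {W : Ω → ℝ × ℝ} (hWm : Measurable W)
    (hmap : Measure.map W ℙ = gmeas.prod gmeas) :
    Measure.map (fun ω => (W ω).1) ℙ = gmeas := by
  have h0 : (fun ω => (W ω).1) = Prod.fst ∘ W := rfl
  rw [h0, ← Measure.map_map measurable_fst hWm, hmap, Measure.map_fst_prod]
  simp

lemma map_comp_snd {W : Ω → ℝ × ℝ} (hWm : Measurable W)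
    (hmap : Measure.map W ℙ = gmeas.prod gmeas) :
    Measure.map (fun ω => (W ω).2) ℙ = gmeas := by
  have h0 : (fun ω => (W ω).2) = Prod.snd ∘ W := rfl
  rw [h0, ← Measure.map_map measurable_snd hWm, hmap, Measure.map_snd_prod]
  simp

lemma memℒp_of_map_gmeas {V : Ω → ℝ} (hVm : Measurable V)
    (hmap : Measure.map V ℙ = gmeas) : MemLp V 2 ℙ := by
  have h : MemLp ((id : ℝ → ℝ) ∘ V) 2 ℙ := by
    rw [← memLp_map_measure_iff aestronglyMeasurable_id hVm.aemeasurable, hmap]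
    exact gmeas_memℒp
  exact h

lemma integral_of_map_gmeas {V : Ω → ℝ} (hVm : Measurable V)
    (hmap : Measure.map V ℙ = gmeas) : ∫ ω, V ω ∂ℙ = 0 := by
  have h : ∫ x, x ∂(Measure.map V ℙ) = ∫ ω, V ω ∂ℙ :=
    integral_map hVm.aemeasurable aestronglyMeasurable_id
  rw [hmap, gmeas_mean] at h
  exact h.symm

lemma integral_sq_of_map_gmeas {V : Ω → ℝ} (hVm : Measurable V)
    (hmap : Measure.map V ℙ = gmeas) : ∫ ω, (V ω)^2 ∂ℙ = 1 := by
  have h : ∫ x, x^2 ∂(Measure.map V ℙ) = ∫ ω, (V ω)^2 ∂ℙ :=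
    integral_map hVm.aemeasurable ((measurable_id.pow_const 2).aestronglyMeasurable)
  rw [hmap, gmeas_sq] at h
  exact h.symm

lemma mul_integrable2 {f g : Ω → ℝ} (hf : MemLp f 2 ℙ) (hg : MemLp g 2 ℙ) :
    Integrable (fun ω => f ω * g ω) ℙ := by
  have hif := (memLp_two_iff_integrable_sq hf.aestronglyMeasurable).mp hf
  have hig := (memLp_two_iff_integrable_sq hg.aestronglyMeasurable).mp hg
  refine Integrable.mono' ((hif.add hig).div_const 2)
    (hf.aestronglyMeasurable.mul hg.aestronglyMeasurable) ?_
  filter_upwards with ω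
  rw [Real.norm_eq_abs, abs_mul]
  simp only [Pi.add_apply]
  nlinarith [sq_nonneg (|f ω| - |g ω|), abs_nonneg (f ω), abs_nonneg (g ω),
    sq_abs (f ω), sq_abs (g ω)]

theorem aux_moments (X Z : ℕ → Ω → ℝ) (hXm : ∀ i, Measurable (X i))
    (hZm : ∀ i, Measurable (Z i))
    (hindep : iIndepFun (fun i ω => (X i ω, Z i ω)) ℙ)
    (hlaw : ∀ i, Measure.map (fun ω => (X i ω, Z i ω)) ℙ = gmeas.prod gmeas)
    (n : ℕ) (κ : (Fin n → ℝ) → ℕ) (hκm : Measurable κ)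
    (K : Ω → ℕ) (hK : ∀ ω, K ω = κ (fun j : Fin n => X (j : ℕ) ω))
    (hKn : ∀ ω, K ω < n) :
    (∫ ω, Z (K ω) ω ∂ℙ) = 0 ∧ (∫ ω, (Z (K ω) ω)^2 ∂ℙ) = 1
      ∧ (∫ ω, X (K ω) ω * Z (K ω) ω ∂ℙ) = 0
      ∧ MemLp (fun ω => X (K ω) ω) 2 ℙ ∧ MemLp (fun ω => Z (K ω) ω) 2 ℙ := by
  classical
  set A : Ω → (Fin n → ℝ) := fun ω (j : Fin n) => X (j : ℕ) ω with hA
  have hAm : Measurable A := measurable_pi_lambda _ fun j => hXm _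
  have hKm : Measurable K := by
    have : K = κ ∘ A := funext fun ω => hK ω
    rw [this]; exact hκm.comp hAm
  have hWm : ∀ k, Measurable (fun ω => (X k ω, Z k ω)) := fun k => (hXm k).prodMk (hZm k)
  have hmapX : ∀ k, Measure.map (X k) ℙ = gmeas := fun k => map_comp_fst (hWm k) (hlaw k)
  have hmapZ : ∀ k, Measure.map (Z k) ℙ = gmeas := fun k => map_comp_snd (hWm k) (hlaw k)
  have hXmem : ∀ k, MemLp (X k) 2 ℙ := fun k => memℒp_of_map_gmeas (hXm k) (hmapX k)
  have hZmem : ∀ k, MemLp (Z k) 2 ℙ := fun k => memℒp_of_map_gmeas (hZm k) (hmapZ k)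
  have hEZ : ∀ k, ∫ ω, Z k ω ∂ℙ = 0 := fun k => integral_of_map_gmeas (hZm k) (hmapZ k)
  have hEZsq : ∀ k, ∫ ω, (Z k ω)^2 ∂ℙ = 1 := fun k => integral_sq_of_map_gmeas (hZm k) (hmapZ k)
  -- events
  set E : ℕ → Set Ω := fun i => {ω | K ω = i} with hE
  have hEm : ∀ i, MeasurableSet (E i) := fun i => hKm (measurableSet_singleton i)
  -- pointwise decomposition
  have hdecomp : ∀ (V : ℕ → Ω → ℝ) (ω : Ω),
      V (K ω) ω = ∑ i ∈ Finset.range n, if K ω = i then V i ω else 0 := by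
    intro V ω
    rw [Finset.sum_ite_eq (Finset.range n) (K ω) (fun i => V i ω)]
    simp [hKn ω]
  -- key per-term independence computation
  have hterm : ∀ i, i < n → ∀ F : (Fin n → ℝ) → ℝ, Measurable F →
      Integrable (fun ω => F (A ω)) ℙ → ∀ G : ℝ → ℝ, Measurable G →
      Integrable (fun ω => G (Z i ω)) ℙ →
      ∫ ω, F (A ω) * G (Z i ω) ∂ℙ
        = (∫ ω, F (A ω) ∂ℙ) * ∫ ω, G (Z i ω) ∂ℙ := by
    intro i hi F hFm hFi G hGm hGi
    have hind := (indep_vec_Z X Z hXm hZm hindep hlaw n i hi).comp hFm hGm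
    exact hind.integral_fun_mul_eq_mul_integral hFi.aestronglyMeasurable hGi.aestronglyMeasurable
  -- indicator functions
  set F : ℕ → (Fin n → ℝ) → ℝ := fun i w => if κ w = i then 1 else 0 with hF
  have hFm : ∀ i, Measurable (F i) := by
    intro i
    apply Measurable.ite _ measurable_const measurable_const
    exact hκm (measurableSet_singleton i)
  have hFA : ∀ i ω, F i (A ω) = if K ω = i then 1 else 0 := by
    intro i ω; rw [hK ω]
  have hFA' : ∀ i, (fun ω => F i (A ω)) = (E i).indicator (fun _ => (1:ℝ)) := by
    intro i; funext ω
    rw [hFA, Set.indicator_apply]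
    rfl
  have hFint : ∀ i, Integrable (fun ω => F i (A ω)) ℙ := by
    intro i
    exact ((integrable_const (1:ℝ)).indicator (hEm i)).congr
      (ae_of_all _ fun ω => (congrFun (hFA' i) ω).symm)
  have hFval : ∀ i, ∫ ω, F i (A ω) ∂ℙ = (ℙ (E i)).toReal := by
    intro i
    have h0 : ∫ ω, F i (A ω) ∂ℙ = ∫ ω, (E i).indicator (fun _ => (1:ℝ)) ω ∂ℙ :=
      integral_congr_ae (ae_of_all _ fun ω => congrFun (hFA' i) ω)
    rw [h0, integral_indicator_const (1:ℝ) (hEm i)]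
    simp
    rfl
  -- part 1 : E[Z_K] = 0
  have hgsum : (fun ω => Z (K ω) ω)
      = fun ω => ∑ i ∈ Finset.range n, F i (A ω) * Z i ω := by
    funext ω
    rw [hdecomp Z ω]
    refine Finset.sum_congr rfl fun i _ => ?_
    rw [hFA]
    split_ifs <;> ring
  have hterm1 : ∀ i ∈ Finset.range n, Integrable (fun ω => F i (A ω) * Z i ω) ℙ := by
    intro i _
    have heq : ∀ ω, (E i).indicator (Z i) ω = F i (A ω) * Z i ω := by
      intro ω
      simp only [Set.indicator_apply, hFA i ω, hE, Set.mem_setOf_eq]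
      split_ifs <;> ring
    exact (((hZmem i).integrable one_le_two).indicator (hEm i)).congr (ae_of_all _ heq)
  have part1 : ∫ ω, Z (K ω) ω ∂ℙ = 0 := by
    rw [hgsum, integral_finset_sum _ hterm1]
    refine Finset.sum_eq_zero fun i hi => ?_
    have := hterm i (Finset.mem_range.mp hi) (F i) (hFm i) (hFint i) id measurable_id
      ((hZmem i).integrable one_le_two)
    simp only [id] at this
    rw [this, hEZ i, mul_zero]
  -- part 2 : E[Z_K ^ 2] = 1
  have hZsqint : ∀ i, Integrable (fun ω => (Z i ω)^2) ℙ :=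
    fun i => (memLp_two_iff_integrable_sq (hZmem i).aestronglyMeasurable).mp (hZmem i)
  have hg2sum : (fun ω => (Z (K ω) ω)^2)
      = fun ω => ∑ i ∈ Finset.range n, F i (A ω) * (Z i ω)^2 := by
    funext ω
    rw [hdecomp (fun i ω => (Z i ω)^2) ω]
    refine Finset.sum_congr rfl fun i _ => ?_
    rw [hFA]
    split_ifs <;> ring
  have hterm2 : ∀ i ∈ Finset.range n, Integrable (fun ω => F i (A ω) * (Z i ω)^2) ℙ := by
    intro i _
    have heq : ∀ ω, (E i).indicator (fun ω => (Z i ω)^2) ω = F i (A ω) * (Z i ω)^2 := by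
      intro ω
      simp only [Set.indicator_apply, hFA i ω, hE, Set.mem_setOf_eq]
      split_ifs <;> ring
    exact ((hZsqint i).indicator (hEm i)).congr (ae_of_all _ heq)
  have hmeasum : ∑ i ∈ Finset.range n, (ℙ (E i)).toReal = 1 := by
    have hcover : ⋃ i ∈ Finset.range n, E i = Set.univ := by
      ext ω
      simp only [Set.mem_iUnion, Set.mem_univ, iff_true, hE, Set.mem_setOf_eq]
      exact ⟨K ω, Finset.mem_range.mpr (hKn ω), rfl⟩
    have hdisj : (↑(Finset.range n) : Set ℕ).PairwiseDisjoint E := by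
      intro i _ j _ hij
      refine Set.disjoint_left.mpr fun ω h1 h2 => hij ?_
      simp only [hE, Set.mem_setOf_eq] at h1 h2
      rw [← h1, ← h2]
    have h1 := measure_biUnion_finset (μ := ℙ) hdisj (fun i _ => hEm i)
    rw [hcover, measure_univ] at h1
    have h2 := congrArg ENNReal.toReal h1
    rw [ENNReal.toReal_sum (fun i _ => measure_ne_top ℙ _)] at h2
    rw [← h2]
    simp
  have part2 : ∫ ω, (Z (K ω) ω)^2 ∂ℙ = 1 := by
    rw [hg2sum, integral_finset_sum _ hterm2]
    rw [← hmeasum]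
    refine Finset.sum_congr rfl fun i hi => ?_
    have := hterm i (Finset.mem_range.mp hi) (F i) (hFm i) (hFint i) (fun x => x^2)
      (measurable_id.pow_const 2) (hZsqint i)
    rw [this, hEZsq i, mul_one, hFval i]
  -- part 3 : E[X_K * Z_K] = 0
  set H : ℕ → (Fin n → ℝ) → ℝ :=
    fun i w => if h : i < n then F i w * w ⟨i, h⟩ else 0 with hH
  have hHm : ∀ i, Measurable (H i) := by
    intro i
    simp only [hH]
    split_ifs with h
    · exact (hFm i).mul (measurable_pi_apply _)
    · exact measurable_const
  have hHA : ∀ i, i < n → ∀ ω, H i (A ω) = if K ω = i then X i ω else 0 := by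
    intro i hi ω
    simp only [hH, dif_pos hi, hFA i ω]
    have : A ω ⟨i, hi⟩ = X i ω := rfl
    rw [this]
    split_ifs <;> ring
  have hHind : ∀ i ∈ Finset.range n, Integrable (fun ω => H i (A ω)) ℙ := by
    intro i hi
    have heq : ∀ ω, (E i).indicator (X i) ω = H i (A ω) := by
      intro ω
      rw [hHA i (Finset.mem_range.mp hi) ω]
      simp only [Set.indicator_apply, hE, Set.mem_setOf_eq]
    exact (((hXmem i).integrable one_le_two).indicator (hEm i)).congr (ae_of_all _ heq)
  have hfgsum : (fun ω => X (K ω) ω * Z (K ω) ω)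
      = fun ω => ∑ i ∈ Finset.range n, H i (A ω) * Z i ω := by
    funext ω
    rw [hdecomp (fun i ω => X i ω * Z i ω) ω]
    refine Finset.sum_congr rfl fun i hi => ?_
    rw [hHA i (Finset.mem_range.mp hi) ω]
    split_ifs <;> ring
  have hterm3 : ∀ i ∈ Finset.range n, Integrable (fun ω => H i (A ω) * Z i ω) ℙ := by
    intro i hi
    have heq : ∀ ω, (E i).indicator (fun ω => X i ω * Z i ω) ω = H i (A ω) * Z i ω := by
      intro ω
      rw [hHA i (Finset.mem_range.mp hi) ω]
      simp only [Set.indicator_apply, hE, Set.mem_setOf_eq]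
      split_ifs <;> ring
    exact ((mul_integrable2 (hXmem i) (hZmem i)).indicator (hEm i)).congr (ae_of_all _ heq)
  have part3 : ∫ ω, X (K ω) ω * Z (K ω) ω ∂ℙ = 0 := by
    rw [hfgsum, integral_finset_sum _ hterm3]
    refine Finset.sum_eq_zero fun i hi => ?_
    have := hterm i (Finset.mem_range.mp hi) (H i) (hHm i) (hHind i hi) id measurable_id
      ((hZmem i).integrable one_le_two)
    simp only [id] at this
    rw [this, hEZ i, mul_zero]
  -- part 4 and 5 : Memℒp
  have part4 : MemLp (fun ω => X (K ω) ω) 2 ℙ := by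
    have heq : (fun ω => X (K ω) ω)
        = fun ω => ∑ i ∈ Finset.range n, (E i).indicator (X i) ω := by
      funext ω
      rw [hdecomp X ω]
      refine Finset.sum_congr rfl fun i _ => ?_
      simp only [Set.indicator_apply, hE, Set.mem_setOf_eq]
    rw [heq]
    exact memLp_finset_sum _ fun i _ => (hXmem i).indicator (hEm i)
  have part5 : MemLp (fun ω => Z (K ω) ω) 2 ℙ := by
    have heq : (fun ω => Z (K ω) ω)
        = fun ω => ∑ i ∈ Finset.range n, (E i).indicator (Z i) ω := by
      funext ω
      rw [hdecomp Z ω]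
      refine Finset.sum_congr rfl fun i _ => ?_
      simp only [Set.indicator_apply, hE, Set.mem_setOf_eq]
    rw [heq]
    exact memLp_finset_sum _ fun i _ => (hZmem i).indicator (hEm i)
  exact ⟨part1, part2, part3, part4, part5⟩

end Stmt1Aux

namespace Stmt1Aux

variable {Ω : Type*} [MeasureSpace Ω] [IsProbabilityMeasure (ℙ : Measure Ω)]

lemma variance_congr {f g : Ω → ℝ} (h : f =ᵐ[ℙ] g) : variance f ℙ = variance g ℙ := by
  have hi : (∫ ω, f ω ∂ℙ) = ∫ ω, g ω ∂ℙ := integral_congr_ae h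
  unfold ProbabilityTheory.variance ProbabilityTheory.evariance
  rw [hi]
  congr 1
  apply lintegral_congr_ae
  filter_upwards [h] with ω hω
  rw [hω]

lemma iIndepFun_ae_congr {ι : Type*} [Countable ι] {β : ι → Type*}
    [m : ∀ i, MeasurableSpace (β i)] {f g : ∀ i, Ω → β i}
    (h : ∀ i, f i =ᵐ[ℙ] g i) (hf : iIndepFun f ℙ) : iIndepFun g ℙ := by
  rw [iIndepFun_iff_measure_inter_preimage_eq_mul] at hf ⊢
  intro S sets hsets
  have hae : ∀ᵐ ω ∂ℙ, ∀ i, i ∈ S → f i ω = g i ω := by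
    rw [ae_all_iff]
    exact fun i => (h i).mono fun ω hω _ => hω
  have h1 : (⋂ i ∈ S, g i ⁻¹' sets i) =ᵐ[ℙ] (⋂ i ∈ S, f i ⁻¹' sets i) := by
    rw [Filter.eventuallyEq_set]
    filter_upwards [hae] with ω hω
    simp only [Set.mem_iInter, Set.mem_preimage]
    constructor <;> intro hh i hi
    · rw [hω i hi]; exact hh i hi
    · rw [← hω i hi]; exact hh i hi
  rw [measure_congr h1, hf S hsets]
  refine Finset.prod_congr rfl fun i hi => measure_congr ?_
  rw [Filter.eventuallyEq_set]
  filter_upwards [h i] with ω hω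
  simp [Set.mem_preimage, hω]

lemma ae_ne_of_indep {U V : Ω → ℝ} (hUm : Measurable U) (hVm : Measurable V)
    (h : IndepFun U V ℙ) (hU : Measure.map U ℙ = gmeas) (hV : Measure.map V ℙ = gmeas) :
    ∀ᵐ ω ∂ℙ, U ω ≠ V ω := by
  have hpair : Measure.map (fun ω => (U ω, V ω)) ℙ = gmeas.prod gmeas := by
    refine ((indepFun_iff_map_prod_eq_prod_map_map hUm.aemeasurable
      hVm.aemeasurable).mp h).trans ?_
    rw [hU, hV]
  have hdiag : MeasurableSet {p : ℝ × ℝ | p.1 = p.2} :=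
    measurableSet_eq_fun measurable_fst measurable_snd
  have hz : (gmeas.prod gmeas) {p : ℝ × ℝ | p.1 = p.2} = 0 := by
    rw [Measure.prod_apply hdiag]
    have h0 : ∀ x : ℝ, gmeas (Prod.mk x ⁻¹' {p : ℝ × ℝ | p.1 = p.2}) = 0 := by
      intro x
      have hset : (Prod.mk x ⁻¹' {p : ℝ × ℝ | p.1 = p.2}) = {x} := by
        ext y; simp [eq_comm]
      rw [hset]
      exact gaussianReal_absolutelyContinuous 0 one_ne_zero (measure_singleton x)
    have h1 : ∀ x : ℝ, gmeas {x} = 0 := fun x =>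
      gaussianReal_absolutelyContinuous 0 one_ne_zero (measure_singleton x)
    simp [h0, h1]
  have hm : ℙ {ω | U ω = V ω} = 0 := by
    have := Measure.map_apply (hUm.prodMk hVm) hdiag (μ := ℙ)
    rw [hpair, hz] at this
    exact this.symm
  rw [Filter.eventually_iff]
  rw [← Filter.eventually_iff]
  rw [ae_iff]
  convert hm using 2
  ext ω
  simp

lemma exists_argmax (n : ℕ) (hn : 0 < n) (w : Fin n → ℝ) :
    ∃ m : ℕ, ∃ h : m < n, ∀ j : Fin n, w j ≤ w ⟨m, h⟩ := by
  obtain ⟨b, _, hb⟩ := Finset.exists_max_image Finset.univ w ⟨⟨0, hn⟩, Finset.mem_univ _⟩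
  exact ⟨(b : ℕ), b.isLt, fun j => by simpa using hb j (Finset.mem_univ j)⟩

open Classical in
noncomputable def argmaxIdx (n : ℕ) (hn : 0 < n) (w : Fin n → ℝ) : ℕ :=
  Nat.find (exists_argmax n hn w)

lemma argmaxIdx_lt (n : ℕ) (hn : 0 < n) (w : Fin n → ℝ) : argmaxIdx n hn w < n := by
  classical
  obtain ⟨h, _⟩ := Nat.find_spec (exists_argmax n hn w)
  exact h

lemma argmaxIdx_max (n : ℕ) (hn : 0 < n) (w : Fin n → ℝ) (j : Fin n) :
    w j ≤ w ⟨argmaxIdx n hn w, argmaxIdx_lt n hn w⟩ := by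
  classical
  obtain ⟨h, hmax⟩ := Nat.find_spec (exists_argmax n hn w)
  exact le_trans (hmax j) (le_of_eq rfl)

lemma argmaxIdx_meas (n : ℕ) (hn : 0 < n) : Measurable (argmaxIdx n hn) := by
  classical
  apply measurable_find
  intro k
  by_cases hk : k < n
  · have hset : {w : Fin n → ℝ | ∃ h : k < n, ∀ j : Fin n, w j ≤ w ⟨k, h⟩}
        = ⋂ j : Fin n, {w : Fin n → ℝ | w j ≤ w ⟨k, hk⟩} := by
      ext w; simp [hk]
    rw [hset]
    exact MeasurableSet.iInter fun j =>
      measurableSet_le (measurable_pi_apply j) (measurable_pi_apply _)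
  · have hset : {w : Fin n → ℝ | ∃ h : k < n, ∀ j : Fin n, w j ≤ w ⟨k, h⟩} = ∅ := by
      ext w; simp [hk]
    rw [hset]
    exact MeasurableSet.empty

end Stmt1Aux

end
end Stmt1AuxSection

open Stmt1Aux

/-- the variance of the max estimator `ρ̂_max = Y_J / E[X_J]` equals
`(ρ² Var(X_J) + (1 - ρ²)) / (E[X_J])²`. -/
theorem stmt1
    {Ω : Type*} [MeasureSpace Ω] [IsProbabilityMeasure (ℙ : Measure Ω)]
    (ρ : ℝ) (hρ : ρ ∈ Set.Icc (-1 : ℝ) 1)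
    (X Z : ℕ → Ω → ℝ)
    (hindep : iIndepFun (fun i ω => (X i ω, Z i ω)) ℙ)
    (hlaw : ∀ i, Measure.map (fun ω => (X i ω, Z i ω)) ℙ
      = (gaussianReal 0 1).prod (gaussianReal 0 1))
    (Y : ℕ → Ω → ℝ)
    (hY : ∀ i ω, Y i ω = ρ * X i ω + Real.sqrt (1 - ρ ^ 2) * Z i ω)
    (n : ℕ) (hn : 2 ≤ n)
    (J : Ω → ℕ) (hJmeas : Measurable J)
    (hJ : ∀ᵐ ω ∂ℙ, J ω < n ∧ ∀ i < n, X i ω ≤ X (J ω) ω) :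
    variance (fun ω => Y (J ω) ω / (∫ ω', X (J ω') ω')) ℙ
      = (ρ ^ 2 * variance (fun ω => X (J ω) ω) ℙ + (1 - ρ ^ 2))
        / (∫ ω', X (J ω') ω') ^ 2 := by
  classical
  have hρ2 : ρ^2 ≤ 1 := by
    obtain ⟨h1, h2⟩ := hρ
    nlinarith
  set s : ℝ := Real.sqrt (1 - ρ^2) with hs
  have hs2 : s^2 = 1 - ρ^2 := Real.sq_sqrt (by linarith)
  -- measurable versions
  have haem : ∀ i, AEMeasurable (fun ω => (X i ω, Z i ω)) ℙ := by
    intro i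
    by_contra hc
    have h0 := Measure.map_of_not_aemeasurable hc
    have h1 : ((gaussianReal 0 1).prod (gaussianReal 0 1)) Set.univ = 0 := by
      rw [← hlaw i, h0]; rfl
    rw [measure_univ] at h1
    exact one_ne_zero h1
  set W' : ℕ → Ω → ℝ × ℝ := fun i => (haem i).mk _ with hW'def
  have hW'm : ∀ i, Measurable (W' i) := fun i => (haem i).measurable_mk
  have hW'ae : ∀ i, (fun ω => (X i ω, Z i ω)) =ᵐ[ℙ] W' i := fun i => (haem i).ae_eq_mk
  set X' : ℕ → Ω → ℝ := fun i ω => (W' i ω).1 with hX'def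
  set Z' : ℕ → Ω → ℝ := fun i ω => (W' i ω).2 with hZ'def
  have hX'm : ∀ i, Measurable (X' i) := fun i => (hW'm i).fst
  have hZ'm : ∀ i, Measurable (Z' i) := fun i => (hW'm i).snd
  have hXae : ∀ i, X i =ᵐ[ℙ] X' i := fun i =>
    (hW'ae i).mono fun ω h => congrArg Prod.fst h
  have hZae : ∀ i, Z i =ᵐ[ℙ] Z' i := fun i =>
    (hW'ae i).mono fun ω h => congrArg Prod.snd h
  have hW'eq : ∀ i, W' i = fun ω => (X' i ω, Z' i ω) := fun i => rfl
  have hlaw' : ∀ i, Measure.map (fun ω => (X' i ω, Z' i ω)) ℙ = gmeas.prod gmeas := by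
    intro i
    rw [← hW'eq i, ← Measure.map_congr (hW'ae i)]
    exact hlaw i
  have hindep' : iIndepFun (fun i ω => (X' i ω, Z' i ω)) ℙ :=
    iIndepFun_ae_congr (fun i => hW'ae i) hindep
  -- argmax index
  have hn0 : 0 < n := lt_of_lt_of_le two_pos hn
  set K : Ω → ℕ := fun ω => argmaxIdx n hn0 (fun j : Fin n => X' (j : ℕ) ω) with hKdef
  have hKn : ∀ ω, K ω < n := fun ω => argmaxIdx_lt n hn0 _
  have hKmax : ∀ ω (j : Fin n), X' (j : ℕ) ω ≤ X' (K ω) ω := by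
    intro ω j
    exact argmaxIdx_max n hn0 (fun j : Fin n => X' (j : ℕ) ω) j
  -- ties
  have hXmap : ∀ i, Measure.map (X' i) ℙ = gmeas := fun i =>
    map_comp_fst (by rw [hW'eq i]; exact (hX'm i).prodMk (hZ'm i)) (hlaw' i)
  have htie : ∀ i j, i ≠ j → (∀ᵐ ω ∂ℙ, X' i ω ≠ X' j ω) := by
    intro i j hij
    have hIJ : IndepFun (X' i) (X' j) ℙ :=
      (hindep'.indepFun hij).comp measurable_fst measurable_fst
    exact ae_ne_of_indep (hX'm i) (hX'm j) hIJ (hXmap i) (hXmap j)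
  have htieall : ∀ᵐ ω ∂ℙ, ∀ i j, i ≠ j → X' i ω ≠ X' j ω := by
    rw [ae_all_iff]
    intro i
    rw [ae_all_iff]
    intro j
    by_cases hij : i = j
    · subst hij
      filter_upwards with ω h
      exact absurd rfl h
    · filter_upwards [htie i j hij] with ω h _
      exact h
  have hXaeall : ∀ᵐ ω ∂ℙ, ∀ i, X i ω = X' i ω := by
    rw [ae_all_iff]; exact hXae
  have hZaeall : ∀ᵐ ω ∂ℙ, ∀ i, Z i ω = Z' i ω := by
    rw [ae_all_iff]; exact hZae
  -- J = K a.e.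
  have hJK : ∀ᵐ ω ∂ℙ, J ω = K ω := by
    filter_upwards [hJ, htieall, hXaeall] with ω hJω htω hXω
    obtain ⟨hJn, hJmax⟩ := hJω
    by_contra hne
    have h1 : X' (J ω) ω ≤ X' (K ω) ω := hKmax ω ⟨J ω, hJn⟩
    have h2 : X' (K ω) ω ≤ X' (J ω) ω := by
      have h3 := hJmax (K ω) (hKn ω)
      rw [hXω (K ω), hXω (J ω)] at h3
      exact h3
    exact htω _ _ hne (le_antisymm h1 h2)
  -- aux moments
  obtain ⟨hEg, hEg2, hEfg, hfmem, hgmem⟩ := aux_moments X' Z' hX'm hZ'm hindep' hlaw'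
    n (argmaxIdx n hn0) (argmaxIdx_meas n hn0) K (fun ω => rfl) hKn
  set f : Ω → ℝ := fun ω => X' (K ω) ω with hfdef
  set g : Ω → ℝ := fun ω => Z' (K ω) ω with hgdef
  -- a.e. identifications
  have haef : (fun ω => X (J ω) ω) =ᵐ[ℙ] f := by
    filter_upwards [hJK, hXaeall] with ω h1 h2
    rw [h2 (J ω), h1]
  have haeY : (fun ω => Y (J ω) ω) =ᵐ[ℙ] (fun ω => ρ * f ω + s * g ω) := by
    filter_upwards [hJK, hXaeall, hZaeall] with ω h1 h2 h3
    rw [hY (J ω) ω, h2 (J ω), h3 (J ω), h1]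
  -- the integral constant
  set c : ℝ := ∫ ω', X (J ω') ω' ∂ℙ with hcdef
  -- integrability facts
  have hf2int : Integrable (fun ω => f ω ^ 2) ℙ :=
    (memLp_two_iff_integrable_sq hfmem.aestronglyMeasurable).mp hfmem
  have hg2int : Integrable (fun ω => g ω ^ 2) ℙ :=
    (memLp_two_iff_integrable_sq hgmem.aestronglyMeasurable).mp hgmem
  have hfgint : Integrable (fun ω => f ω * g ω) ℙ := mul_integrable2 hfmem hgmem
  have hfint : Integrable f ℙ := hfmem.integrable one_le_two
  have hgint : Integrable g ℙ := hgmem.integrable one_le_two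
  -- h := ρ f + s g
  set h : Ω → ℝ := fun ω => ρ * f ω + s * g ω with hhdef
  have hhmem : MemLp h 2 ℙ := (hfmem.const_mul ρ).add (hgmem.const_mul s)
  have hEh : ∫ ω, h ω ∂ℙ = ρ * ∫ ω, f ω ∂ℙ := by
    rw [hhdef]
    rw [integral_add (hfint.const_mul ρ) (hgint.const_mul s)]
    rw [integral_const_mul, integral_const_mul, hEg, mul_zero, add_zero]
  have hEh2 : ∫ ω, h ω ^ 2 ∂ℙ = ρ^2 * (∫ ω, f ω ^ 2 ∂ℙ) + (1 - ρ^2) := by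
    have hexp : (fun ω => h ω ^ 2)
        = fun ω => ρ^2 * f ω ^ 2 + ((2 * ρ * s) * (f ω * g ω) + s^2 * g ω ^ 2) := by
      funext ω
      rw [hhdef]
      ring
    rw [hexp]
    have hsum2 : Integrable (fun ω => (2 * ρ * s) * (f ω * g ω) + s^2 * g ω ^ 2) ℙ :=
      (hfgint.const_mul _).add (hg2int.const_mul _)
    have i1 : Integrable (fun ω => ρ^2 * f ω ^ 2) ℙ := hf2int.const_mul _
    have i2 : Integrable (fun ω => (2 * ρ * s) * (f ω * g ω)) ℙ := hfgint.const_mul _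
    have i3 : Integrable (fun ω => s^2 * g ω ^ 2) ℙ := hg2int.const_mul _
    rw [integral_add i1 hsum2, integral_add i2 i3]
    rw [integral_const_mul, integral_const_mul, integral_const_mul, hEfg, hEg2, hs2]
    ring
  -- variances
  have hvarh : variance h ℙ = ρ^2 * variance f ℙ + (1 - ρ^2) := by
    rw [variance_eq_sub hhmem, variance_eq_sub hfmem]
    have e1 : (∫ ω, (h ^ 2) ω ∂ℙ) = ∫ ω, h ω ^ 2 ∂ℙ := by
      congr 1
    have e2 : (∫ ω, (f ^ 2) ω ∂ℙ) = ∫ ω, f ω ^ 2 ∂ℙ := by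
      congr 1
    rw [e1, e2, hEh2, hEh]
    ring
  have hvarf : variance (fun ω => X (J ω) ω) ℙ = variance f ℙ := Stmt1Aux.variance_congr haef
  -- final computation
  have hlhs : variance (fun ω => Y (J ω) ω / c) ℙ = c⁻¹ ^ 2 * variance h ℙ := by
    have h1 : (fun ω => Y (J ω) ω / c) =ᵐ[ℙ] (c⁻¹ • h) := by
      filter_upwards [haeY] with ω hω
      rw [hω]
      simp only [Pi.smul_apply, smul_eq_mul, hhdef]
      rw [div_eq_inv_mul]
    rw [Stmt1Aux.variance_congr h1, variance_smul]
  rw [hlhs, hvarh, hvarf]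
  rw [div_eq_mul_inv, ← inv_pow, mul_comm]
end

section
/- Let h_g(p) = (−p log₂ p − (1−p) log₂(1−p))/p for p ∈ (0,1) denote the entropy of the geometric distribution with parameter p. Then lim_{t→∞} (2 ln 2) · h_g(Q(t)) / t² = 1; that is, the expected number of bits k = h_g(Q(t)) needed to describe the first index at which a standard normal sequence exceeds the threshold t satisfies k = t²·(1/(2 ln 2) + o(1)) as t → ∞. -/
set_option autoImplicit false

open MeasureTheory Filter Set Real

/-- The standard normal tail `Q(x) = ∫ₓ^∞ φ(u) du`. -/
noncomputable def gaussTail (x : ℝ) : ℝ := ∫ u in Set.Ioi x, stdGaussianPDF u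

/-- The entropy `h_g(p) = h(p)/p` of the geometric distribution with parameter `p`, where
`h(p) = -p log₂ p - (1-p) log₂ (1-p)` is the binary entropy. -/
noncomputable def geomEntropy (p : ℝ) : ℝ :=
  (-p * Real.logb 2 p - (1 - p) * Real.logb 2 (1 - p)) / p

lemma sqrt2pi_pos : 0 < Real.sqrt (2 * Real.pi) :=
  Real.sqrt_pos.2 (by positivity)

lemma pdf_pos (x : ℝ) : 0 < stdGaussianPDF x :=
  div_pos (Real.exp_pos _) sqrt2pi_pos

lemma integrable_pdf : Integrable stdGaussianPDF := by
  have h : stdGaussianPDF = fun x => Real.exp (-(1/2) * x ^ 2) * (Real.sqrt (2 * Real.pi))⁻¹ := by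
    funext x
    rw [stdGaussianPDF, div_eq_mul_inv]
    congr 2
    ring
  rw [h]
  exact (integrable_exp_neg_mul_sq (by norm_num)).mul_const _

lemma tail_lower (t : ℝ) (ht : 0 ≤ t) : stdGaussianPDF (t + 1) ≤ gaussTail t := by
  have h1 : ∫ u in Set.Ioc t (t+1), stdGaussianPDF u ≤ gaussTail t := by
    apply setIntegral_mono_set integrable_pdf.integrableOn
    · exact Filter.Eventually.of_forall fun x => (pdf_pos x).le
    · exact Filter.Eventually.of_forall (fun x hx => Set.Ioc_subset_Ioi_self hx)
  refine le_trans ?_ h1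
  have h2 : ∫ _u in Set.Ioc t (t+1), stdGaussianPDF (t+1) = stdGaussianPDF (t+1) := by
    rw [setIntegral_const, Real.volume_real_Ioc]
    simp
  rw [← h2]
  apply setIntegral_mono_on (integrableOn_const (by rw [Real.volume_Ioc]; exact ENNReal.ofReal_ne_top))
    integrable_pdf.integrableOn measurableSet_Ioc
  intro u hu
  have hu1 : 0 < u := lt_of_le_of_lt ht hu.1
  unfold stdGaussianPDF
  gcongr
  exact hu.2

lemma tail_pos (t : ℝ) (ht : 0 ≤ t) : 0 < gaussTail t :=
  lt_of_lt_of_le (pdf_pos _) (tail_lower t ht)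

lemma exp_integral_Ioi (t : ℝ) (ht : 0 < t) :
    ∫ u in Set.Ioi t, Real.exp (-(t/2) * u) = (2/t) * Real.exp (-t^2/2) := by
  have hderiv : ∀ x ∈ Set.Ici t, HasDerivAt (fun u => -(2/t) * Real.exp (-(t/2) * u))
      (Real.exp (-(t/2) * x)) x := by
    intro x _
    have h1 : HasDerivAt (fun u : ℝ => -(t/2) * u) (-(t/2)) x := by
      simpa using (hasDerivAt_id x).const_mul (-(t/2))
    have h2 := (h1.exp).const_mul (-(2/t))
    refine h2.congr_deriv ?_
    have ht0 : t ≠ 0 := by rintro rfl; simp at ht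
    field_simp
  have htend : Tendsto (fun u => -(2/t) * Real.exp (-(t/2) * u)) atTop (nhds 0) := by
    have : Tendsto (fun u : ℝ => Real.exp (-(t/2) * u)) atTop (nhds 0) := by
      apply Real.tendsto_exp_atBot.comp
      exact Tendsto.const_mul_atTop_of_neg (by linarith) tendsto_id
    simpa using this.const_mul (-(2/t))
  rw [integral_Ioi_of_hasDerivAt_of_tendsto' hderiv
    (exp_neg_integrableOn_Ioi t (by linarith)) htend]
  rw [zero_sub]
  have : -(t/2) * t = -t^2/2 := by ring
  rw [this]
  ring

lemma tail_upper (t : ℝ) (ht : 0 < t) :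
    gaussTail t ≤ (2/t) * Real.exp (-t^2/2) / Real.sqrt (2 * Real.pi) := by
  have key : gaussTail t ≤ ∫ u in Set.Ioi t, Real.exp (-(t/2) * u) / Real.sqrt (2 * Real.pi) := by
    apply setIntegral_mono_on integrable_pdf.integrableOn
      (((exp_neg_integrableOn_Ioi t (by linarith))).div_const _) measurableSet_Ioi
    intro u hu
    unfold stdGaussianPDF
    gcongr
    nlinarith [Set.mem_Ioi.1 hu]
  rwa [integral_div, exp_integral_Ioi t ht] at key

lemma one_div_tendsto : Tendsto (fun t : ℝ => 1 / t) atTop (nhds 0) := by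
  simpa [one_div] using (tendsto_inv_atTop_zero : Tendsto (fun x:ℝ => x⁻¹) atTop (nhds 0))

lemma log_div_sq_tendsto : Tendsto (fun t : ℝ => Real.log t / t ^ 2) atTop (nhds 0) := by
  apply tendsto_of_tendsto_of_tendsto_of_le_of_le' tendsto_const_nhds one_div_tendsto
  · filter_upwards [eventually_ge_atTop (1:ℝ)] with t ht
    have := Real.log_nonneg ht
    positivity
  · filter_upwards [eventually_ge_atTop (1:ℝ)] with t ht
    have h1 : Real.log t ≤ t := (Real.log_le_sub_one_of_pos (by linarith)).trans (by linarith)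
    rw [div_le_div_iff₀ (by positivity) (by positivity)]
    nlinarith

lemma logQ_tendsto :
    Tendsto (fun t : ℝ => Real.log (gaussTail t) / t ^ 2) atTop (nhds (-(1/2))) := by
  set c := Real.log (Real.sqrt (2 * Real.pi)) with hc
  have hL : Tendsto (fun t : ℝ => (-(t+1)^2/2 - c) / t^2) atTop (nhds (-(1/2))) := by
    have hcont : Tendsto (fun x : ℝ => -(1/2)*(1+x)^2 - c*x^2) (nhds 0) (nhds (-(1/2))) := by
      have : Continuous (fun x : ℝ => -(1/2)*(1+x)^2 - c*x^2) := by continuity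
      have h := this.tendsto 0
      norm_num at h
      convert h using 2
      norm_num
    apply (hcont.comp one_div_tendsto).congr'
    filter_upwards [eventually_gt_atTop (0:ℝ)] with t ht
    have ht' : t ≠ 0 := ne_of_gt ht
    simp only [Function.comp_apply]
    field_simp
  have hU : Tendsto (fun t : ℝ => (Real.log 2 - Real.log t - t^2/2 - c) / t^2) atTop
      (nhds (-(1/2))) := by
    have h1 : Tendsto (fun t : ℝ => (Real.log 2 - c) / t^2) atTop (nhds 0) :=
      tendsto_const_nhds.div_atTop (tendsto_pow_atTop (by norm_num))
    have h2 := (h1.sub log_div_sq_tendsto).sub (tendsto_const_nhds (x := (1:ℝ)/2))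
    norm_num at h2
    apply h2.congr'
    filter_upwards [eventually_gt_atTop (0:ℝ)] with t ht
    have ht' : t ≠ 0 := ne_of_gt ht
    field_simp
    ring
  apply tendsto_of_tendsto_of_tendsto_of_le_of_le' hL hU
  · filter_upwards [eventually_ge_atTop (0:ℝ)] with t ht
    have hlow : -(t+1)^2/2 - c ≤ Real.log (gaussTail t) := by
      have := Real.log_le_log (pdf_pos (t+1)) (tail_lower t ht)
      rwa [stdGaussianPDF, Real.log_div (Real.exp_ne_zero _) (ne_of_gt sqrt2pi_pos),
        Real.log_exp] at this
    gcongr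
  · filter_upwards [eventually_gt_atTop (0:ℝ)] with t ht
    have hup : Real.log (gaussTail t) ≤ Real.log 2 - Real.log t - t^2/2 - c := by
      have := Real.log_le_log (tail_pos t ht.le) (tail_upper t ht)
      rw [Real.log_div (by positivity) (ne_of_gt sqrt2pi_pos),
        Real.log_mul (by positivity) (Real.exp_ne_zero _), Real.log_exp,
        Real.log_div (by norm_num) (ne_of_gt ht)] at this
      linarith
    gcongr

lemma tail_le_third (t : ℝ) (ht : 2 ≤ t) : gaussTail t ≤ 1/3 := by
  have h1 := tail_upper t (by linarith)
  have h2 : (2:ℝ)/t ≤ 1 := by rw [div_le_one (by linarith)]; linarith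
  have h3 : Real.exp (-t^2/2) ≤ Real.exp (-2) := by
    apply Real.exp_le_exp.2; nlinarith
  have h4 : Real.exp (-2) ≤ 1/3 := by
    rw [Real.exp_neg, inv_le_comm₀ (Real.exp_pos _) (by norm_num)]
    have := Real.add_one_le_exp (2:ℝ)
    linarith
  have h5 : (1:ℝ) ≤ Real.sqrt (2 * Real.pi) := by
    rw [show (1:ℝ) = Real.sqrt 1 by simp]
    apply Real.sqrt_le_sqrt
    nlinarith [Real.pi_gt_three]
  calc gaussTail t ≤ (2/t) * Real.exp (-t^2/2) / Real.sqrt (2*Real.pi) := h1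
    _ ≤ 1 * (1/3) / 1 := by
        apply div_le_div₀ (by norm_num) ?_ one_pos h5
        have : 0 ≤ (2:ℝ)/t := by positivity
        nlinarith [Real.exp_pos (-t^2/2)]
    _ = 1/3 := by norm_num

/-- `(2 ln 2) · h_g(Q(t)) / t² → 1` as `t → ∞`, i.e. the expected number of
bits `k = h_g(Q(t))` satisfies `k = t² (1/(2 ln 2) + o(1))`. -/
theorem stmt6 :
    Tendsto (fun t : ℝ => 2 * Real.log 2 * geomEntropy (gaussTail t) / t ^ 2)
      atTop (nhds 1) := by
  have hA : Tendsto (fun t : ℝ => -2 * Real.log (gaussTail t) / t ^ 2) atTop (nhds 1) := by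
    have := logQ_tendsto.const_mul (-2)
    norm_num at this
    apply this.congr
    intro t
    ring
  have hB : Tendsto (fun t : ℝ =>
      (-(2 * (1 - gaussTail t) * Real.log (1 - gaussTail t) / gaussTail t)) / t ^ 2)
      atTop (nhds 0) := by
    have h2t : Tendsto (fun t : ℝ => 2 / t ^ 2) atTop (nhds 0) :=
      tendsto_const_nhds.div_atTop (tendsto_pow_atTop (by norm_num))
    apply tendsto_of_tendsto_of_tendsto_of_le_of_le' tendsto_const_nhds h2t
    · filter_upwards [eventually_ge_atTop (2:ℝ)] with t ht
      set p := gaussTail t with hp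
      have hp0 : 0 < p := tail_pos t (by linarith)
      have hp1 : p ≤ 1/3 := tail_le_third t ht
      have hlog : Real.log (1 - p) ≤ 0 := Real.log_nonpos (by linarith) (by linarith)
      have : 0 ≤ -(2 * (1 - p) * Real.log (1 - p) / p) := by
        rw [neg_nonneg]
        apply div_nonpos_of_nonpos_of_nonneg ?_ hp0.le
        nlinarith
      exact div_nonneg this (sq_nonneg t)
    · filter_upwards [eventually_ge_atTop (2:ℝ)] with t ht
      set p := gaussTail t with hp
      have hp0 : 0 < p := tail_pos t (by linarith)
      have hp1 : p ≤ 1/3 := tail_le_third t ht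
      have hq : (0:ℝ) < 1 - p := by linarith
      have h2 : (1-p) * (-Real.log (1-p)) ≤ p := by
        have h1 : Real.log ((1-p)⁻¹) ≤ (1-p)⁻¹ - 1 :=
          Real.log_le_sub_one_of_pos (by positivity)
        rw [Real.log_inv] at h1
        have hinv := mul_inv_cancel₀ (ne_of_gt hq)
        nlinarith
      have hkey : -(2 * (1 - p) * Real.log (1 - p) / p) ≤ 2 := by
        have heq : -(2 * (1 - p) * Real.log (1 - p) / p)
            = 2 * ((1-p) * (-Real.log (1-p))) / p := by ring
        rw [heq, div_le_iff₀ hp0]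
        nlinarith
      gcongr
  have := hA.add hB
  norm_num at this
  apply this.congr'
  filter_upwards [eventually_ge_atTop (2:ℝ)] with t ht
  set p := gaussTail t with hp
  have hp0 : 0 < p := tail_pos t (by linarith)
  have hp1 : p < 1 := lt_of_le_of_lt (tail_le_third t ht) (by norm_num)
  have hl2 : Real.log 2 ≠ 0 := ne_of_gt (Real.log_pos one_lt_two)
  have ht0 : t ≠ 0 := by linarith
  rw [geomEntropy, Real.logb, Real.logb]
  field_simp
  ring
end

section
/- Let M be a random d×d real matrix whose d² entries are mutually independent, whose diagonal entries are identically distributed, and whose off-diagonal entries are identically distributed with a symmetric distribution (M_{ij} has the same law as −M_{ij} for i ≠ j). Assume M is almost surely invertible and that every entry of (M Mᵀ)⁻¹ is integrable. Then E[(M Mᵀ)⁻¹] is a scalar multiple of the d×d identity matrix. -/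
set_option autoImplicit false

open MeasureTheory ProbabilityTheory Matrix

instance matrixMeasurableSpace {m n α : Type*} [MeasurableSpace α] :
    MeasurableSpace (Matrix m n α) :=
  inferInstanceAs (MeasurableSpace (m → n → α))

instance matrixBorelSpace {m n : Type*} [Countable m] [Countable n] :
    BorelSpace (Matrix m n ℝ) :=
  inferInstanceAs (BorelSpace (m → n → ℝ))

section Aux

variable {Ω : Type*} [MeasureSpace Ω] [IsProbabilityMeasure (ℙ : Measure Ω)]

/-- The joint law of an independent family is the product of the marginal laws. -/
lemma aux_map_eq_pi {ι : Type*} [Fintype ι] {X : ι → Ω → ℝ}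
    (hm : ∀ i, Measurable (X i))
    (h : iIndepFun X ℙ) :
    Measure.map (fun ω i => X i ω) ℙ = Measure.pi (fun i => Measure.map (X i) ℙ) := by
  have hprob : ∀ i, IsProbabilityMeasure (Measure.map (X i) ℙ) :=
    fun i => Measure.isProbabilityMeasure_map (hm i).aemeasurable
  refine (Measure.pi_eq ?_).symm
  intro s hs
  rw [Measure.map_apply (measurable_pi_lambda _ hm) (MeasurableSet.univ_pi hs)]
  have hpre : (fun ω i => X i ω) ⁻¹' (Set.univ.pi s) = ⋂ i ∈ Finset.univ, X i ⁻¹' s i := by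
    ext ω; simp [Set.mem_pi]
  rw [hpre, h.measure_inter_preimage_eq_mul Finset.univ (fun i _ => hs i)]
  exact Finset.prod_congr rfl fun i _ => (Measure.map_apply (hm i) (hs i)).symm

/-- Independence is preserved by reindexing along an equivalence. -/
lemma aux_iIndepFun_reindex {ι ι' : Type*} (e : ι' ≃ ι) {X : ι → Ω → ℝ}
    (h : iIndepFun X ℙ) :
    iIndepFun (fun i => X (e i)) ℙ := by
  rw [iIndepFun_iff_measure_inter_preimage_eq_mul] at h ⊢
  intro S sets hsets
  classical
  set sets' : ι → Set ℝ := fun j => sets (e.symm j) with hsets'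
  have h1 : (⋂ i ∈ S, X (e i) ⁻¹' sets i) = ⋂ j ∈ S.image e, X j ⁻¹' sets' j := by
    ext ω
    simp only [Set.mem_iInter, Finset.mem_image, Set.mem_preimage]
    constructor
    · rintro hh j ⟨i, hi, rfl⟩
      simpa [hsets'] using hh i hi
    · intro hh i hi
      simpa [hsets'] using hh (e i) ⟨i, hi, rfl⟩
  rw [h1, h (S.image e) (fun j hj => ?_),
    Finset.prod_image (fun i _ j _ hij => e.injective hij)]
  · exact Finset.prod_congr rfl fun i _ => by simp [hsets']
  · obtain ⟨i, hi, rfl⟩ := Finset.mem_image.1 hj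
    simpa [hsets'] using hsets i hi

/-- Two independent families of real random variables with identically distributed
marginals have the same joint law. -/
lemma aux_joint_identDistrib {ι : Type*} [Fintype ι] {X Y : ι → Ω → ℝ}
    (hXm : ∀ i, Measurable (X i)) (hYm : ∀ i, Measurable (Y i))
    (hX : iIndepFun X ℙ)
    (hY : iIndepFun Y ℙ)
    (h : ∀ i, IdentDistrib (X i) (Y i) ℙ ℙ) :
    IdentDistrib (fun ω i => X i ω) (fun ω i => Y i ω) ℙ ℙ := by
  refine ⟨(measurable_pi_lambda _ hXm).aemeasurable,
    (measurable_pi_lambda _ hYm).aemeasurable, ?_⟩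
  rw [aux_map_eq_pi hXm hX, aux_map_eq_pi hYm hY]
  exact congrArg Measure.pi (funext fun i => (h i).map_eq)

/-- Matrix-level version: two random matrices with independent entries and
identically distributed corresponding entries are identically distributed. -/
lemma aux_matrix_identDistrib {d : ℕ} {M N : Ω → Matrix (Fin d) (Fin d) ℝ}
    (hMm : ∀ i j, Measurable fun ω => M ω i j) (hNm : ∀ i j, Measurable fun ω => N ω i j)
    (hM : iIndepFun (fun (p : Fin d × Fin d) ω => M ω p.1 p.2) ℙ)
    (hN : iIndepFun (fun (p : Fin d × Fin d) ω => N ω p.1 p.2) ℙ)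
    (h : ∀ i j, IdentDistrib (fun ω => M ω i j) (fun ω => N ω i j) ℙ ℙ) :
    IdentDistrib M N ℙ ℙ := by
  have hJ := aux_joint_identDistrib (X := fun (p : Fin d × Fin d) ω => M ω p.1 p.2)
    (Y := fun (p : Fin d × Fin d) ω => N ω p.1 p.2)
    (fun p => hMm p.1 p.2) (fun p => hNm p.1 p.2) hM hN (fun p => h p.1 p.2)
  have hg : Measurable (fun f : (Fin d × Fin d) → ℝ =>
      (Matrix.of fun i j => f (i, j) : Matrix (Fin d) (Fin d) ℝ)) :=
    measurable_pi_lambda _ fun i => measurable_pi_lambda _ fun j => measurable_pi_apply (i, j)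
  exact hJ.comp hg

/-- The entries of `(X * Xᵀ)⁻¹` are measurable functions of `X`. -/
lemma aux_measurable_invEntry {d : ℕ} (i j : Fin d) :
    Measurable fun X : Matrix (Fin d) (Fin d) ℝ => ((X * Xᵀ)⁻¹) i j := by
  have hmul : Continuous fun X : Matrix (Fin d) (Fin d) ℝ => X * Xᵀ :=
    continuous_id.matrix_mul continuous_id.matrix_transpose
  have hdet : Measurable fun X : Matrix (Fin d) (Fin d) ℝ => ((X * Xᵀ).det)⁻¹ :=
    hmul.matrix_det.measurable.inv
  have hadj : Measurable fun X : Matrix (Fin d) (Fin d) ℝ => (X * Xᵀ).adjugate i j :=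
    (hmul.matrix_adjugate.matrix_elem i j).measurable
  simp only [Matrix.inv_def, Matrix.smul_apply, Ring.inverse_eq_inv', smul_eq_mul]
  exact hdet.mul hadj

end Aux

/-- if the entries of a random matrix `M` are mutually independent, the
diagonal entries identically distributed, the off-diagonal entries identically distributed
with a symmetric distribution, `M` is almost surely invertible, and every entry of
`(M Mᵀ)⁻¹` is integrable, then `E[(M Mᵀ)⁻¹]` is a scalar multiple of the identity. -/
theorem stmt11
    {Ω : Type*} [MeasureSpace Ω] [IsProbabilityMeasure (ℙ : Measure Ω)]
    (d : ℕ) (M : Ω → Matrix (Fin d) (Fin d) ℝ)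
    (hmeas : ∀ i j, Measurable fun ω => M ω i j)
    (hindep : iIndepFun (fun (p : Fin d × Fin d) ω => M ω p.1 p.2) ℙ)
    (hdiag : ∀ i j, IdentDistrib (fun ω => M ω i i) (fun ω => M ω j j) ℙ ℙ)
    (hoff : ∀ i j k l, i ≠ j → k ≠ l →
      IdentDistrib (fun ω => M ω i j) (fun ω => M ω k l) ℙ ℙ)
    (hsym : ∀ i j, i ≠ j →
      IdentDistrib (fun ω => M ω i j) (fun ω => -(M ω i j)) ℙ ℙ)
    (hinv : ∀ᵐ ω ∂ℙ, IsUnit (M ω))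
    (hint : ∀ i j, Integrable (fun ω => ((M ω * (M ω)ᵀ)⁻¹) i j) ℙ) :
    ∃ c : ℝ, (Matrix.of fun i j => ∫ ω, ((M ω * (M ω)ᵀ)⁻¹) i j)
      = c • (1 : Matrix (Fin d) (Fin d) ℝ) := by
  classical
  -- Step 1: off-diagonal expectations vanish.
  have hoffzero : ∀ i j : Fin d, i ≠ j → (∫ ω, ((M ω * (M ω)ᵀ)⁻¹) i j) = 0 := by
    intro i j hij
    set ε : Fin d → ℝ := fun k => if k = i then -1 else 1 with hε
    set D : Matrix (Fin d) (Fin d) ℝ := Matrix.diagonal ε with hD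
    set N : Ω → Matrix (Fin d) (Fin d) ℝ :=
      fun ω => Matrix.of fun a b => ε a * M ω a b * ε b with hNdef
    have hNm : ∀ a b, Measurable fun ω => N ω a b := fun a b =>
      ((hmeas a b).const_mul (ε a)).mul_const (ε b)
    have hNindep : iIndepFun
        (fun (p : Fin d × Fin d) ω => N ω p.1 p.2) ℙ := by
      have := hindep.comp (fun (p : Fin d × Fin d) (x : ℝ) => ε p.1 * x * ε p.2)
        (fun p => (measurable_id.const_mul (ε p.1)).mul_const (ε p.2))
      exact this
    have hmarg : ∀ a b, IdentDistrib (fun ω => M ω a b) (fun ω => N ω a b) ℙ ℙ := by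
      intro a b
      by_cases ha : a = i <;> by_cases hb : b = i
      · have : (fun ω => N ω a b) = fun ω => M ω a b := by
          funext ω; simp [hNdef, hε, ha, hb]
        rw [this]; exact IdentDistrib.refl (hmeas a b).aemeasurable
      · have hab : a ≠ b := by rintro rfl; exact hb ha
        have : (fun ω => N ω a b) = fun ω => -(M ω a b) := by
          funext ω; simp [hNdef, hε, ha, hb]
        rw [this]; exact hsym a b hab
      · have hab : a ≠ b := by rintro rfl; exact ha hb
        have : (fun ω => N ω a b) = fun ω => -(M ω a b) := by
          funext ω; simp [hNdef, hε, ha, hb]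
        rw [this]; exact hsym a b hab
      · have : (fun ω => N ω a b) = fun ω => M ω a b := by
          funext ω; simp [hNdef, hε, ha, hb]
        rw [this]; exact IdentDistrib.refl (hmeas a b).aemeasurable
    have hMN : IdentDistrib M N ℙ ℙ :=
      aux_matrix_identDistrib hmeas hNm hindep hNindep hmarg
    have hIeq : (∫ ω, ((M ω * (M ω)ᵀ)⁻¹) i j) = ∫ ω, ((N ω * (N ω)ᵀ)⁻¹) i j :=
      (hMN.comp (aux_measurable_invEntry i j)).integral_eq
    -- pointwise: ((N ω * (N ω)ᵀ)⁻¹) i j = - ((M ω * (M ω)ᵀ)⁻¹) i j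
    have hDD : D * D = 1 := by
      rw [hD, Matrix.diagonal_mul_diagonal]
      ext a b
      by_cases hab : a = b
      · subst hab
        by_cases ha : a = i <;>
          simp [hε, ha, Matrix.diagonal_apply_eq, Matrix.one_apply_eq]
      · simp [Matrix.diagonal_apply_ne _ hab, Matrix.one_apply_ne hab]
    have hpoint : ∀ ω, ((N ω * (N ω)ᵀ)⁻¹) i j = -(((M ω * (M ω)ᵀ)⁻¹) i j) := by
      intro ω
      have hNeq : N ω = D * M ω * D := by
        ext a b
        simp [hNdef, hD, Matrix.mul_diagonal, Matrix.diagonal_mul, mul_comm, mul_assoc, mul_left_comm]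
      have hDt : Dᵀ = D := by rw [hD, Matrix.diagonal_transpose]
      have key : ∀ A B : Matrix (Fin d) (Fin d) ℝ, (D*A*D)*(D*B*D) = D*(A*B)*D := by
        intro A B
        calc (D*A*D)*(D*B*D) = D*A*(D*D)*(B*D) := by noncomm_ring
          _ = D*(A*B)*D := by rw [hDD]; noncomm_ring
      have hNt : (N ω)ᵀ = D * (M ω)ᵀ * D := by
        rw [hNeq, Matrix.transpose_mul, Matrix.transpose_mul, hDt, ← Matrix.mul_assoc]
      have h1 : N ω * (N ω)ᵀ = D * (M ω * (M ω)ᵀ) * D := by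
        rw [hNt, hNeq, key]
      have hDinv : D⁻¹ = D := Matrix.inv_eq_right_inv hDD
      have h2 : (N ω * (N ω)ᵀ)⁻¹ = D * (M ω * (M ω)ᵀ)⁻¹ * D := by
        rw [h1, Matrix.mul_inv_rev, Matrix.mul_inv_rev, hDinv, ← Matrix.mul_assoc]
      rw [h2, hD]
      simp [Matrix.diagonal_mul, Matrix.mul_diagonal, hε, hij.symm]
    simp only [hpoint] at hIeq
    rw [integral_neg] at hIeq
    linarith
  -- Step 2: diagonal expectations are all equal.
  have hdiageq : ∀ i j : Fin d,
      (∫ ω, ((M ω * (M ω)ᵀ)⁻¹) i i) = ∫ ω, ((M ω * (M ω)ᵀ)⁻¹) j j := by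
    intro i j
    set σ : Equiv.Perm (Fin d) := Equiv.swap i j with hσ
    set N : Ω → Matrix (Fin d) (Fin d) ℝ :=
      fun ω => (M ω).submatrix σ σ with hNdef
    have hNm : ∀ a b, Measurable fun ω => N ω a b := fun a b => hmeas (σ a) (σ b)
    have hNindep : iIndepFun
        (fun (p : Fin d × Fin d) ω => N ω p.1 p.2) ℙ := by
      have := aux_iIndepFun_reindex (Equiv.prodCongr σ σ) hindep
      exact this
    have hmarg : ∀ a b, IdentDistrib (fun ω => M ω a b) (fun ω => N ω a b) ℙ ℙ := by
      intro a b
      by_cases hab : a = b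
      · subst hab
        exact hdiag a (σ a)
      · exact hoff a b (σ a) (σ b) hab (fun h => hab (σ.injective h))
    have hMN : IdentDistrib M N ℙ ℙ :=
      aux_matrix_identDistrib hmeas hNm hindep hNindep hmarg
    have hIeq : (∫ ω, ((M ω * (M ω)ᵀ)⁻¹) j j) = ∫ ω, ((N ω * (N ω)ᵀ)⁻¹) j j :=
      (hMN.comp (aux_measurable_invEntry j j)).integral_eq
    have hpoint : ∀ ω, ((N ω * (N ω)ᵀ)⁻¹) j j = ((M ω * (M ω)ᵀ)⁻¹) i i := by
      intro ω
      have h1 : N ω * (N ω)ᵀ = (M ω * (M ω)ᵀ).submatrix σ σ := by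
        simp only [hNdef]
        rw [Matrix.transpose_submatrix, Matrix.submatrix_mul_equiv]
      rw [h1, Matrix.inv_submatrix_equiv]
      simp [hσ, Equiv.swap_apply_right]
    simp only [hpoint] at hIeq
    exact hIeq.symm
  -- Step 3: assemble.
  rcases Nat.eq_zero_or_pos d with hd | hd
  · subst hd
    exact ⟨0, by ext i j; exact i.elim0⟩
  · set i0 : Fin d := ⟨0, hd⟩
    refine ⟨∫ ω, ((M ω * (M ω)ᵀ)⁻¹) i0 i0, ?_⟩
    ext i j
    by_cases hij : i = j
    · subst hij
      simp only [Matrix.of_apply, Matrix.smul_apply, Matrix.one_apply_eq, smul_eq_mul, mul_one]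
      exact hdiageq i i0
    · simp only [Matrix.of_apply, Matrix.smul_apply, Matrix.one_apply_ne hij, smul_eq_mul,
        mul_zero]
      exact hoffzero i j hij
end

section
/- (Johnson's singular value bound.) Let B = (b_{ij}) be a real d×d matrix and set m = min_{i∈[d]} ( |b_{ii}| − (1/2)( Σ_{j≠i} |b_{ij}| + Σ_{j≠i} |b_{ji}| ) ). Then every x ∈ ℝ^d satisfies ‖Bx‖₂ ≥ m·‖x‖₂; that is, the smallest singular value of B is at least m. -/
set_option autoImplicit false
set_option maxHeartbeats 1000000

open Matrix Finset

/-- Johnson's singular value bound: for a real `d × d` matrix `B` with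
`m = minᵢ (|bᵢᵢ| - ½(Σ_{j≠i} |bᵢⱼ| + Σ_{j≠i} |bⱼᵢ|))`, every `x ∈ ℝᵈ` satisfies
`‖Bx‖₂ ≥ m ‖x‖₂`, i.e. the smallest singular value of `B` is at least `m`. -/
theorem stmt13 (d : ℕ) (hd : 0 < d) (B : Matrix (Fin d) (Fin d) ℝ) :
    ∀ x : Fin d → ℝ,
      (Finset.univ.inf' (Finset.univ_nonempty_iff.mpr (Fin.pos_iff_nonempty.mp hd))
          fun i => |B i i| - (1 / 2) *
            ((∑ j ∈ Finset.univ.erase i, |B i j|) + ∑ j ∈ Finset.univ.erase i, |B j i|))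
        * Real.sqrt (∑ i, x i ^ 2) ≤ Real.sqrt (∑ i, (B.mulVec x i) ^ 2) := by
  intro x
  have hne : (Finset.univ : Finset (Fin d)).Nonempty :=
    Finset.univ_nonempty_iff.mpr (Fin.pos_iff_nonempty.mp hd)
  set m : ℝ := Finset.univ.inf' hne
      (fun i => |B i i| - (1 / 2) *
        ((∑ j ∈ Finset.univ.erase i, |B i j|) + ∑ j ∈ Finset.univ.erase i, |B j i|)) with hm
  show m * Real.sqrt (∑ i, x i ^ 2) ≤ Real.sqrt (∑ i, (B.mulVec x i) ^ 2)
  set X : ℝ := ∑ i, x i ^ 2 with hX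
  have hX0 : 0 ≤ X := Finset.sum_nonneg fun i _ => sq_nonneg _
  set ε : Fin d → ℝ := fun i => if 0 ≤ B i i then 1 else -1 with hε
  have hε2 : ∀ i, ε i ^ 2 = 1 := by
    intro i; simp only [hε]; split <;> norm_num
  have hεabs : ∀ i, |ε i| = 1 := by
    intro i; simp only [hε]; split <;> norm_num
  have hεd : ∀ i, ε i * B i i = |B i i| := by
    intro i; simp only [hε]; split
    · rw [abs_of_nonneg ‹_›]; ring
    · rw [abs_of_neg (lt_of_not_ge ‹_›)]; ring
  have hmulVec : ∀ i, B.mulVec x i = ∑ j, B i j * x j := fun i => rfl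
  set S : ℝ := ∑ i, (ε i * x i) * B.mulVec x i with hS
  -- Cauchy-Schwarz
  have hcs : S ≤ Real.sqrt X * Real.sqrt (∑ i, (B.mulVec x i) ^ 2) := by
    have h1 : S ^ 2 ≤ (∑ i, (ε i * x i) ^ 2) * ∑ i, (B.mulVec x i) ^ 2 :=
      Finset.sum_mul_sq_le_sq_mul_sq _ _ _
    have h2 : (∑ i, (ε i * x i) ^ 2) = X := by
      rw [hX]; apply Finset.sum_congr rfl; intro i _
      rw [mul_pow, hε2 i]; ring
    calc S ≤ |S| := le_abs_self _
      _ = Real.sqrt (S ^ 2) := (Real.sqrt_sq_eq_abs S).symm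
      _ ≤ Real.sqrt (X * ∑ i, (B.mulVec x i) ^ 2) :=
          Real.sqrt_le_sqrt (by rw [← h2]; exact h1)
      _ = _ := Real.sqrt_mul hX0 _
  -- Expand S
  have hBexp : S = ∑ i, (|B i i| * x i ^ 2 +
      ∑ j ∈ Finset.univ.erase i, ε i * x i * (B i j * x j)) := by
    rw [hS]; apply Finset.sum_congr rfl; intro i _
    rw [hmulVec i, Finset.mul_sum, ← Finset.add_sum_erase _ _ (Finset.mem_univ i)]
    congr 1
    rw [← hεd i]; ring
  -- Swap double sum
  have hswap : (∑ i, ∑ j ∈ Finset.univ.erase i, |B i j| * x j ^ 2)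
      = ∑ i, ∑ j ∈ Finset.univ.erase i, |B j i| * x i ^ 2 := by
    have e : ∀ (g : Fin d → Fin d → ℝ) (i : Fin d),
        (∑ j ∈ Finset.univ.erase i, g i j) = (∑ j, g i j) - g i i := by
      intro g i
      rw [← Finset.add_sum_erase _ (g i) (Finset.mem_univ i)]; ring
    have e' : ∀ (g : Fin d → Fin d → ℝ) (i : Fin d),
        (∑ j ∈ Finset.univ.erase i, g j i) = (∑ j, g j i) - g i i := by
      intro g i
      rw [← Finset.add_sum_erase _ (fun j => g j i) (Finset.mem_univ i)]; ring
    calc (∑ i, ∑ j ∈ Finset.univ.erase i, |B i j| * x j ^ 2)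
        = ∑ i, ((∑ j, |B i j| * x j ^ 2) - |B i i| * x i ^ 2) :=
          Finset.sum_congr rfl fun i _ => e (fun i j => |B i j| * x j ^ 2) i
      _ = (∑ i, ∑ j, |B i j| * x j ^ 2) - ∑ i, |B i i| * x i ^ 2 := by
          rw [Finset.sum_sub_distrib]
      _ = (∑ j, ∑ i, |B i j| * x j ^ 2) - ∑ i, |B i i| * x i ^ 2 := by
          rw [Finset.sum_comm]
      _ = ∑ i, ((∑ j, |B j i| * x i ^ 2) - |B i i| * x i ^ 2) := by
          rw [Finset.sum_sub_distrib]
      _ = ∑ i, ∑ j ∈ Finset.univ.erase i, |B j i| * x i ^ 2 :=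
          Finset.sum_congr rfl fun i _ => (e' (fun j i => |B j i| * x i ^ 2) i).symm
  -- column sums in terms of row sums
  have hQR : (∑ i, ∑ j ∈ Finset.univ.erase i, (1 / 2 : ℝ) * (|B j i| * x i ^ 2))
      = ∑ i, ∑ j ∈ Finset.univ.erase i, (1 / 2 : ℝ) * (|B i j| * x j ^ 2) := by
    simp_rw [← Finset.mul_sum]
    rw [hswap]
  -- pointwise lower bound on the off-diagonal part
  have hinner : ∀ i : Fin d,
      (∑ j ∈ Finset.univ.erase i,
        (-((1 / 2 : ℝ) * (|B i j| * x i ^ 2)) - (1 / 2) * (|B i j| * x j ^ 2)))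
      ≤ ∑ j ∈ Finset.univ.erase i, ε i * x i * (B i j * x j) := by
    intro i
    apply Finset.sum_le_sum
    intro j _
    have h1 : |ε i * x i * (B i j * x j)| = |B i j| * (|x i| * |x j|) := by
      rw [abs_mul, abs_mul, abs_mul, hεabs i]; ring
    have h2 : |x i| * |x j| ≤ (x i ^ 2 + x j ^ 2) / 2 := by
      nlinarith [sq_nonneg (|x i| - |x j|), sq_abs (x i), sq_abs (x j)]
    have h3 := neg_abs_le (ε i * x i * (B i j * x j))
    have h4 := mul_le_mul_of_nonneg_left h2 (abs_nonneg (B i j))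
    rw [h1] at h3
    nlinarith
  -- lower bound on S
  have hlow : (∑ i, (|B i i| - (1 / 2) *
      ((∑ j ∈ Finset.univ.erase i, |B i j|) + ∑ j ∈ Finset.univ.erase i, |B j i|)) * x i ^ 2)
      ≤ S := by
    rw [hBexp]
    have step1 : (∑ i, (|B i i| - (1 / 2) *
        ((∑ j ∈ Finset.univ.erase i, |B i j|) + ∑ j ∈ Finset.univ.erase i, |B j i|)) * x i ^ 2)
        = ∑ i, (|B i i| * x i ^ 2
            - (∑ j ∈ Finset.univ.erase i, (1 / 2 : ℝ) * (|B i j| * x i ^ 2))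
            - (∑ j ∈ Finset.univ.erase i, (1 / 2 : ℝ) * (|B j i| * x i ^ 2))) := by
      apply Finset.sum_congr rfl; intro i _
      rw [← Finset.mul_sum, ← Finset.mul_sum, ← Finset.sum_mul, ← Finset.sum_mul]
      ring
    rw [step1, Finset.sum_sub_distrib, Finset.sum_sub_distrib, hQR,
      Finset.sum_add_distrib]
    have htot := Finset.sum_le_sum (fun i (_ : i ∈ Finset.univ) => hinner i)
    have hsplit : (∑ i, ∑ j ∈ Finset.univ.erase i,
        (-((1 / 2 : ℝ) * (|B i j| * x i ^ 2)) - (1 / 2) * (|B i j| * x j ^ 2)))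
        = -(∑ i, ∑ j ∈ Finset.univ.erase i, (1 / 2 : ℝ) * (|B i j| * x i ^ 2))
          - ∑ i, ∑ j ∈ Finset.univ.erase i, (1 / 2 : ℝ) * (|B i j| * x j ^ 2) := by
      simp_rw [Finset.sum_sub_distrib, Finset.sum_neg_distrib]
    rw [hsplit] at htot
    linarith
  -- conclude
  have hchain : m * X ≤ Real.sqrt X * Real.sqrt (∑ i, (B.mulVec x i) ^ 2) := by
    refine le_trans ?_ (le_trans hlow hcs)
    rw [hX, Finset.mul_sum]
    apply Finset.sum_le_sum
    intro i _
    exact mul_le_mul_of_nonneg_right (Finset.inf'_le _ (Finset.mem_univ i)) (sq_nonneg _)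
  rcases eq_or_lt_of_le hX0 with h0 | h0
  · rw [← h0, Real.sqrt_zero, mul_zero]
    exact Real.sqrt_nonneg _
  · have hsX : 0 < Real.sqrt X := Real.sqrt_pos.mpr h0
    nlinarith [Real.mul_self_sqrt hX0, Real.sqrt_nonneg (∑ i, (B.mulVec x i) ^ 2)]
end

section
/- Let M be a real d×d matrix and let a > 0, b ≥ 0 satisfy a > (d−1)b. If |M_{ii}| ≥ a for every i and |M_{ij}| ≤ b for every i ≠ j, then M is invertible and tr( (M Mᵀ)⁻¹ ) ≤ d / (a − (d−1)b)². -/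
set_option autoImplicit false

open Matrix

/-- if `|Mᵢᵢ| ≥ a` for all `i`, `|Mᵢⱼ| ≤ b` for all `i ≠ j`, and
`a > (d-1)b` with `a > 0`, `b ≥ 0`, then `M` is invertible and
`tr((M Mᵀ)⁻¹) ≤ d / (a - (d-1)b)²`. -/
theorem stmt14 (d : ℕ) (M : Matrix (Fin d) (Fin d) ℝ) (a b : ℝ)
    (ha : 0 < a) (hb : 0 ≤ b) (hab : ((d : ℝ) - 1) * b < a)
    (hdiag : ∀ i, a ≤ |M i i|)
    (hoff : ∀ i j, i ≠ j → |M i j| ≤ b) :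
    IsUnit M ∧
      Matrix.trace ((M * Mᵀ)⁻¹) ≤ (d : ℝ) / (a - ((d : ℝ) - 1) * b) ^ 2 := by
  set c : ℝ := a - ((d : ℝ) - 1) * b with hc_def
  have hc : 0 < c := by simp [hc_def]; linarith
  rcases Nat.eq_zero_or_pos d with hd0 | hd
  · subst hd0
    constructor
    · have : M = 1 := Subsingleton.elim _ _
      simp [this]
    · have : Matrix.trace ((M * Mᵀ)⁻¹) = 0 := by
        simp [Matrix.trace]
      rw [this]
      positivity
  -- d ≥ 1
  have hdcast : ((d - 1 : ℕ) : ℝ) = (d : ℝ) - 1 := by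
    rw [Nat.cast_sub hd, Nat.cast_one]
  -- row sums of off-diagonal entries
  have hrow : ∀ k : Fin d, ∑ j ∈ Finset.univ.erase k, |M k j| ≤ ((d : ℝ) - 1) * b := by
    intro k
    have hcard : (Finset.univ.erase k).card = d - 1 := by
      simp [Finset.card_erase_of_mem]
    calc ∑ j ∈ Finset.univ.erase k, |M k j|
        ≤ ∑ j ∈ Finset.univ.erase k, b := by
          refine Finset.sum_le_sum ?_
          intro j hj
          exact hoff k j (Ne.symm (Finset.ne_of_mem_erase hj))
      _ = ((d : ℝ) - 1) * b := by
          rw [Finset.sum_const, hcard, nsmul_eq_mul, hdcast]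
  -- determinant nonzero (strict diagonal dominance)
  have hdet : M.det ≠ 0 := by
    apply det_ne_zero_of_sum_row_lt_diag
    intro k
    have h1 := hrow k
    have h2 := hdiag k
    simp only [Real.norm_eq_abs]
    linarith
  have hM : IsUnit M := by
    rw [Matrix.isUnit_iff_isUnit_det]
    exact hdet.isUnit
  refine ⟨hM, ?_⟩
  set N : Matrix (Fin d) (Fin d) ℝ := M⁻¹ with hN_def
  have hMN : M * N = 1 := Matrix.mul_nonsing_inv M hdet.isUnit
  -- key: amplification at the max coordinate
  have key : ∀ v : Fin d → ℝ, ∀ k : Fin d, (∀ j, |v j| ≤ |v k|) →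
      c * |v k| ≤ |M.mulVec v k| := by
    intro v k hk
    have hsplit : M.mulVec v k = M k k * v k + ∑ j ∈ Finset.univ.erase k, M k j * v j := by
      rw [Matrix.mulVec, dotProduct]
      exact (Finset.add_sum_erase _ _ (Finset.mem_univ k)).symm
    have hbound : |∑ j ∈ Finset.univ.erase k, M k j * v j| ≤ ((d : ℝ) - 1) * b * |v k| := by
      calc |∑ j ∈ Finset.univ.erase k, M k j * v j|
          ≤ ∑ j ∈ Finset.univ.erase k, |M k j * v j| := Finset.abs_sum_le_sum_abs _ _
        _ ≤ ∑ j ∈ Finset.univ.erase k, b * |v k| := by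
            refine Finset.sum_le_sum ?_
            intro j hj
            rw [abs_mul]
            exact mul_le_mul (hoff k j (Ne.symm (Finset.ne_of_mem_erase hj))) (hk j)
              (abs_nonneg _) hb
        _ = ((d : ℝ) - 1) * b * |v k| := by
            rw [Finset.sum_const, nsmul_eq_mul]
            have hcard : (Finset.univ.erase k).card = d - 1 := by
              simp [Finset.card_erase_of_mem]
            rw [hcard, hdcast]; ring
    have hdiag' : a * |v k| ≤ |M k k * v k| := by
      rw [abs_mul]
      exact mul_le_mul_of_nonneg_right (hdiag k) (abs_nonneg _)
    calc c * |v k| = a * |v k| - ((d : ℝ) - 1) * b * |v k| := by rw [hc_def]; ring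
      _ ≤ |M k k * v k| - |∑ j ∈ Finset.univ.erase k, M k j * v j| := by linarith
      _ ≤ |M k k * v k + ∑ j ∈ Finset.univ.erase k, M k j * v j| := by
          have := abs_add_le (M k k * v k + ∑ j ∈ Finset.univ.erase k, M k j * v j)
            (-(∑ j ∈ Finset.univ.erase k, M k j * v j))
          simp only [add_neg_cancel_right, abs_neg] at this
          linarith
      _ = |M.mulVec v k| := by rw [hsplit]
  -- Varah bound on row sums of N
  have varah : ∀ i : Fin d, ∑ j, |N i j| ≤ 1 / c := by
    intro i
    set x : Fin d → ℝ := fun j => if N i j < 0 then -1 else 1 with hx_def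
    have hx1 : ∀ j, |x j| = 1 := by
      intro j; by_cases h : N i j < 0 <;> simp [hx_def, h]
    have hxval : ∀ j, N i j * x j = |N i j| := by
      intro j
      by_cases h : N i j < 0
      · simp [hx_def, h, abs_of_neg h]
      · simp [hx_def, h, abs_of_nonneg (not_lt.mp h)]
    set v : Fin d → ℝ := N.mulVec x with hv_def
    have hvi : v i = ∑ j, |N i j| := by
      rw [hv_def, Matrix.mulVec, dotProduct]
      exact Finset.sum_congr rfl fun j _ => hxval j
    have hMv : M.mulVec v = x := by
      rw [hv_def, Matrix.mulVec_mulVec, hMN, Matrix.one_mulVec]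
    obtain ⟨k, -, hk⟩ := Finset.exists_max_image Finset.univ (fun j => |v j|)
      ⟨⟨0, hd⟩, Finset.mem_univ _⟩
    have hk' : ∀ j, |v j| ≤ |v k| := fun j => hk j (Finset.mem_univ j)
    have h1 : c * |v k| ≤ 1 := by
      have := key v k hk'
      rw [hMv] at this
      calc c * |v k| ≤ |x k| := this
        _ = 1 := hx1 k
    have h2 : ∑ j, |N i j| ≤ |v k| := by
      rw [← hvi]
      exact le_trans (le_abs_self _) (hk' i)
    calc ∑ j, |N i j| ≤ |v k| := h2
      _ ≤ 1 / c := by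
        rw [le_div_iff₀ hc]
        linarith [h1]
  -- now the trace bound
  have hinv : (M * Mᵀ)⁻¹ = Nᵀ * N := by
    rw [Matrix.mul_inv_rev, Matrix.transpose_nonsing_inv, hN_def]
  rw [hinv]
  have htr : Matrix.trace (Nᵀ * N) = ∑ i, ∑ j, (N j i) ^ 2 := by
    rw [Matrix.trace]
    refine Finset.sum_congr rfl fun i _ => ?_
    simp [Matrix.mul_apply, Matrix.diag, sq]
  rw [htr]
  rw [Finset.sum_comm]
  have hrowsq : ∀ j : Fin d, ∑ i, (N j i) ^ 2 ≤ 1 / c ^ 2 := by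
    intro j
    have hS : ∑ i, |N j i| ≤ 1 / c := varah j
    have hSnn : 0 ≤ ∑ i, |N j i| := Finset.sum_nonneg fun i _ => abs_nonneg _
    calc ∑ i, (N j i) ^ 2 = ∑ i, |N j i| * |N j i| := by
          refine Finset.sum_congr rfl fun i _ => ?_
          rw [sq, abs_mul_abs_self]
      _ ≤ ∑ i, |N j i| * (∑ i', |N j i'|) := by
          refine Finset.sum_le_sum fun i _ => ?_
          refine mul_le_mul_of_nonneg_left ?_ (abs_nonneg _)
          exact Finset.single_le_sum (fun i' _ => abs_nonneg (N j i')) (Finset.mem_univ i)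
      _ = (∑ i, |N j i|) * (∑ i', |N j i'|) := by rw [← Finset.sum_mul]
      _ ≤ (1 / c) * (1 / c) := mul_le_mul hS hS hSnn (by positivity)
      _ = 1 / c ^ 2 := by rw [one_div_mul_one_div, ← sq]
  calc ∑ j, ∑ i, (N j i) ^ 2 ≤ ∑ j : Fin d, 1 / c ^ 2 :=
        Finset.sum_le_sum fun j _ => hrowsq j
    _ = (d : ℝ) * (1 / c ^ 2) := by rw [Finset.sum_const, Finset.card_univ, Fintype.card_fin, nsmul_eq_mul]
    _ = (d : ℝ) / c ^ 2 := by ring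
end
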